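/- arXiv:1209.5451 — 3 statements merged into one kernel-verified Lean document; each statement's English description precedes it below -/
import Mathlib

section
/- No finite graph with three or more branch points is 7-arc connected. -/
open Set Topology

/-- The points `0` and `1` of the unit interval `[0,1]`. -/
def i0 : Set.Icc (0:ℝ) 1 := ⟨0, by norm_num⟩
def i1 : Set.Icc (0:ℝ) 1 := ⟨1, by norm_num⟩

/-- A subset `A` of a topological space `X` is an *arc* if, with the subspace
topology, it is homeomorphic to the closed unit interval `[0,1]`. -/
def IsArc {X : Type*} [TopologicalSpace X] (A : Set X) : Prop :=
  Nonempty (A ≃ₜ Set.Icc (0:ℝ) 1)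

/-- `X` is `n`-arc connected if any `n` points of `X` lie on a common arc. -/
def NArcConnected (X : Type*) [TopologicalSpace X] (n : ℕ) : Prop :=
  ∀ p : Fin n → X, ∃ A : Set X, IsArc A ∧ ∀ i, p i ∈ A

open Classical
/-- A (connected, compact Hausdorff) topological finite graph structure on `X`:
finitely many arcs (edges), given as embeddings of `[0,1]`, covering `X`,
such that two distinct edges meet only in common endpoints. -/
structure TopGraph (X : Type*) [TopologicalSpace X] where
  n : ℕ
  edge : Fin n → Set.Icc (0:ℝ) 1 → X
  emb : ∀ i, Topology.IsEmbedding (edge i)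
  cover : (⋃ i, Set.range (edge i)) = Set.univ
  meet : ∀ i j, i ≠ j → ∀ x ∈ Set.range (edge i) ∩ Set.range (edge j),
    (x = edge i i0 ∨ x = edge i i1) ∧ (x = edge j i0 ∨ x = edge j i1)

/-- The degree (order) of a point of a finite graph: the number of edge-germs at it,
counted via incidences of edge endpoints.  (Points interior to an edge have order two;
they are never branch points.) -/
noncomputable def TopGraph.degree {X : Type*} [TopologicalSpace X] (G : TopGraph X) (x : X) : ℕ :=
  ∑ i : Fin G.n, ((if G.edge i i0 = x then 1 else 0) + (if G.edge i i1 = x then 1 else 0))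

/-- A branch point of a finite graph is a point of order at least `3`. -/
def TopGraph.IsBranchPoint {X : Type*} [TopologicalSpace X] (G : TopGraph X) (x : X) : Prop :=
  3 ≤ G.degree x


noncomputable section

namespace SevenAC

variable {X : Type*} [TopologicalSpace X]

/-- Setup for analyzing how an arc meets an open set `O`. -/
structure SideSetup (X : Type*) [TopologicalSpace X] (A : Set X) where
  e : A ≃ₜ Set.Icc (0:ℝ) 1
  O : Set X
  hO : IsOpen O
  m : X
  hmO : m ∈ O
  hmA : m ∈ A

namespace SideSetup

variable {A : Set X} (c : SideSetup X A)

def phi : A → ℝ := fun a => (c.e a : ℝ)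

lemma phi_inj : Function.Injective c.phi := by
  intro a b h
  have : (c.e a) = (c.e b) := Subtype.ext h
  exact c.e.injective this

def SI : Set (Set.Icc (0:ℝ) 1) := {p | ((c.e.symm p : A) : X) ∈ c.O}

lemma SI_open : IsOpen c.SI := by
  have h1 : Continuous fun p : Set.Icc (0:ℝ) 1 => ((c.e.symm p : A) : X) :=
    continuous_subtype_val.comp c.e.symm.continuous
  exact c.hO.preimage h1

def S : Set ℝ := Subtype.val '' c.SI

lemma S_eq_phi_image : c.S = c.phi '' {a : A | (a : X) ∈ c.O} := by
  ext x
  constructor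
  · rintro ⟨p, hp, rfl⟩
    exact ⟨c.e.symm p, hp, by simp [phi]⟩
  · rintro ⟨a, ha, rfl⟩
    exact ⟨c.e a, by simpa [SI] using ha, rfl⟩

lemma S_subset_Icc : c.S ⊆ Set.Icc (0:ℝ) 1 := by
  rintro x ⟨p, _, rfl⟩; exact p.2

lemma S_relopen : ∀ s ∈ c.S, ∃ δ > (0:ℝ),
    Set.Ioo (s - δ) (s + δ) ∩ Set.Icc (0:ℝ) 1 ⊆ c.S := by
  rintro s ⟨p, hp, rfl⟩
  obtain ⟨V, hV, hVeq⟩ := isOpen_induced_iff.mp c.SI_open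
  have hpV : (p : ℝ) ∈ V := by rw [← hVeq] at hp; exact hp
  obtain ⟨δ, hδ, hball⟩ := Metric.isOpen_iff.mp hV _ hpV
  refine ⟨δ, hδ, ?_⟩
  rintro x ⟨hx1, hx2⟩
  have : x ∈ Metric.ball (p : ℝ) δ := by
    rw [Real.ball_eq_Ioo]; exact hx1
  refine ⟨⟨x, hx2⟩, ?_, rfl⟩
  rw [← hVeq]; exact hball this

def t0 : ℝ := c.phi ⟨c.m, c.hmA⟩

lemma t0_mem_S : c.t0 ∈ c.S := by
  rw [S_eq_phi_image]; exact ⟨⟨c.m, c.hmA⟩, c.hmO, rfl⟩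

lemma t0_mem_Icc : c.t0 ∈ Set.Icc (0:ℝ) 1 := c.S_subset_Icc c.t0_mem_S

def J : Set ℝ := {x | x ∈ Set.Icc (0:ℝ) 1 ∧ Set.uIcc x c.t0 ∩ Set.Icc (0:ℝ) 1 ⊆ c.S}

lemma t0_mem_J : c.t0 ∈ c.J := by
  refine ⟨c.t0_mem_Icc, ?_⟩
  rintro x ⟨hx1, _⟩
  rw [Set.uIcc_self] at hx1
  rcases hx1 with rfl
  exact c.t0_mem_S

lemma J_subset_S : c.J ⊆ c.S := by
  rintro x ⟨hx, hsub⟩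
  exact hsub ⟨Set.left_mem_uIcc, hx⟩

lemma J_subset_Icc : c.J ⊆ Set.Icc (0:ℝ) 1 := fun _ h => h.1

lemma J_nonempty : c.J.Nonempty := ⟨c.t0, c.t0_mem_J⟩

lemma J_bddBelow : BddBelow c.J := ⟨0, fun x hx => (c.J_subset_Icc hx).1⟩

/-- star-shapedness of `J` around `t0`. -/
lemma J_star {x y : ℝ} (hx : x ∈ c.J) (hy : y ∈ Set.uIcc x c.t0) : y ∈ c.J := by
  have hyI : y ∈ Set.Icc (0:ℝ) 1 := by
    have : Set.uIcc x c.t0 ⊆ Set.Icc (0:ℝ) 1 :=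
      Set.OrdConnected.uIcc_subset Set.ordConnected_Icc hx.1 c.t0_mem_Icc
    exact this hy
  refine ⟨hyI, ?_⟩
  have : Set.uIcc y c.t0 ⊆ Set.uIcc x c.t0 :=
    Set.uIcc_subset_uIcc hy Set.right_mem_uIcc
  exact fun z hz => hx.2 ⟨this hz.1, hz.2⟩

def LJ : ℝ := sInf c.J

lemma LJ_mem_Icc : c.LJ ∈ Set.Icc (0:ℝ) 1 := by
  constructor
  · exact le_csInf c.J_nonempty (fun x hx => (c.J_subset_Icc hx).1)
  · exact csInf_le_of_le c.J_bddBelow c.t0_mem_J c.t0_mem_Icc.2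

lemma LJ_le_t0 : c.LJ ≤ c.t0 := csInf_le c.J_bddBelow c.t0_mem_J

/-- If the infimum of `J` belongs to `S`, it belongs to `J`. -/
lemma LJ_mem_J_of_mem_S (h : c.LJ ∈ c.S) : c.LJ ∈ c.J := by
  obtain ⟨δ, hδ, hball⟩ := c.S_relopen _ h
  obtain ⟨x, hxJ, hx⟩ := (csInf_lt_iff c.J_bddBelow c.J_nonempty).mp
    (lt_add_of_pos_right c.LJ hδ)
  have hLx : c.LJ ≤ x := csInf_le c.J_bddBelow hxJ
  refine ⟨c.S_subset_Icc h, ?_⟩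
  intro z hz
  have : Set.uIcc c.LJ c.t0 ⊆ Set.uIcc c.LJ x ∪ Set.uIcc x c.t0 :=
    Set.uIcc_subset_uIcc_union_uIcc
  rcases this hz.1 with h1 | h1
  · apply hball
    refine ⟨?_, hz.2⟩
    rw [Set.uIcc_of_le hLx] at h1
    constructor
    · linarith [h1.1]
    · linarith [h1.2, hx]
  · exact hxJ.2 ⟨h1, hz.2⟩

lemma LJ_eq_zero_of_mem_J (h : c.LJ ∈ c.J) : c.LJ = 0 := by
  by_contra h0
  have hpos : 0 < c.LJ := lt_of_le_of_ne c.LJ_mem_Icc.1 (Ne.symm h0)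
  obtain ⟨δ, hδ, hball⟩ := c.S_relopen _ (c.J_subset_S h)
  set y : ℝ := max 0 (c.LJ - min δ c.LJ / 2) with hy
  have hy0 : 0 ≤ y := le_max_left _ _
  have hylt : y < c.LJ := by
    apply max_lt hpos
    have : 0 < min δ c.LJ := lt_min hδ hpos
    linarith
  have hyI : y ∈ Set.Icc (0:ℝ) 1 := ⟨hy0, le_trans hylt.le c.LJ_mem_Icc.2⟩
  have hyJ : y ∈ c.J := by
    refine ⟨hyI, ?_⟩
    intro z hz
    have : Set.uIcc y c.t0 ⊆ Set.uIcc y c.LJ ∪ Set.uIcc c.LJ c.t0 :=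
      Set.uIcc_subset_uIcc_union_uIcc
    rcases this hz.1 with h1 | h1
    · apply hball
      refine ⟨?_, hz.2⟩
      rw [Set.uIcc_of_le hylt.le] at h1
      have hmin : 0 < min δ c.LJ := lt_min hδ hpos
      have hyge : c.LJ - min δ c.LJ / 2 ≤ y := le_max_right _ _
      have h2 : min δ c.LJ ≤ δ := min_le_left _ _
      constructor
      · have := h1.1; simp only [hy] at hyge ⊢; nlinarith
      · nlinarith [h1.2]
    · exact h.2 ⟨h1, hz.2⟩
  have : c.LJ ≤ y := csInf_le c.J_bddBelow hyJ
  linarith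

lemma Ioc_subset_J : Set.Ioc c.LJ c.t0 ⊆ c.J := by
  intro y hy
  obtain ⟨x, hxJ, hx⟩ := (csInf_lt_iff c.J_bddBelow c.J_nonempty).mp hy.1
  apply c.J_star hxJ
  rw [Set.uIcc_of_le (le_trans hx.le hy.2)]
  exact ⟨hx.le, hy.2⟩

lemma LJ_mem_closure_S : c.LJ ∈ closure c.S :=
  closure_mono c.J_subset_S (csInf_mem_closure c.J_nonempty c.J_bddBelow)

/-- the attachment point of the left side. -/
def alpha : X := (c.e.symm ⟨c.LJ, c.LJ_mem_Icc⟩ : A)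

lemma phi_alpha : c.phi (c.e.symm ⟨c.LJ, c.LJ_mem_Icc⟩) = c.LJ := by
  simp [phi]

lemma alpha_mem_A : c.alpha ∈ A := (c.e.symm ⟨c.LJ, c.LJ_mem_Icc⟩).2

lemma alpha_not_mem_O (h : c.LJ ∉ c.S) : c.alpha ∉ c.O := by
  intro hmem
  apply h
  rw [S_eq_phi_image]
  exact ⟨c.e.symm ⟨c.LJ, c.LJ_mem_Icc⟩, hmem, c.phi_alpha⟩

lemma alpha_mem_closure_O : c.alpha ∈ closure c.O := by
  have h1 : (⟨c.LJ, c.LJ_mem_Icc⟩ : Set.Icc (0:ℝ) 1) ∈ closure c.SI := by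
    rw [closure_subtype]
    exact c.LJ_mem_closure_S
  have h2 : c.e.symm ⟨c.LJ, c.LJ_mem_Icc⟩ ∈ closure (c.e.symm '' c.SI) := by
    rw [← c.e.symm.image_closure]
    exact Set.mem_image_of_mem _ h1
  have h3 : (c.alpha : X) ∈ closure (Subtype.val '' (c.e.symm '' c.SI)) :=
    closure_subtype.mp h2
  refine closure_mono ?_ h3
  rintro x ⟨p, hp, rfl⟩
  rcases hp with ⟨q, hq, rfl⟩
  simpa [SI] using hq

end SideSetup


/-- the reflection homeomorphism of `[0,1]`. -/
def iccReflect : (Set.Icc (0:ℝ) 1) ≃ₜ (Set.Icc (0:ℝ) 1) where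
  toFun p := ⟨1 - p.1, ⟨by linarith [p.2.2], by linarith [p.2.1]⟩⟩
  invFun p := ⟨1 - p.1, ⟨by linarith [p.2.2], by linarith [p.2.1]⟩⟩
  left_inv p := by ext; simp
  right_inv p := by ext; simp
  continuous_toFun := by
    apply Continuous.subtype_mk
    exact continuous_const.sub continuous_subtype_val
  continuous_invFun := by
    apply Continuous.subtype_mk
    exact continuous_const.sub continuous_subtype_val

/-- An "edge-like" piece of the space. -/
structure Item (X : Type*) [TopologicalSpace X] where
  O : Set X
  a : X
  b : X
  m : X
  hO : IsOpen O
  hm : m ∈ O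
  bd : closure O \ O ⊆ {a, b}

theorem master [DecidableEq X] {A : Set X} (hA : IsArc A) {K : Type*} [Fintype K]
    (it : K → Item X) (hdisj : ∀ k l : K, k ≠ l → (it k).O ∩ (it l).O = ∅)
    (hmA : ∀ k, (it k).m ∈ A) (Y : Finset X)
    (hcount : 2 * Y.card + 2 < ∑ k, (({(it k).a, (it k).b} : Finset X) ∩ Y).card) :
    False := by
  classical
  obtain ⟨e⟩ := hA
  set eR := e.trans iccReflect with heR
  set cL : K → SideSetup X A :=
    fun k => ⟨e, (it k).O, (it k).hO, (it k).m, (it k).hm, hmA k⟩ with hcL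
  set cR : K → SideSetup X A :=
    fun k => ⟨eR, (it k).O, (it k).hO, (it k).m, (it k).hm, hmA k⟩ with hcR
  have Sdisj : ∀ (c1 c2 : SideSetup X A), c1.e = c2.e → (c1.O ∩ c2.O = ∅) →
      ∀ x, x ∈ c1.S → x ∈ c2.S → False := by
    intro c1 c2 he hO x h1 h2
    rw [SideSetup.S_eq_phi_image] at h1 h2
    obtain ⟨a1, ha1, hx1⟩ := h1
    obtain ⟨a2, ha2, hx2⟩ := h2
    have hp : c1.phi a1 = c1.phi a2 := by
      rw [hx1, ← hx2]
      simp [SideSetup.phi, he]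
    have ha12 := c1.phi_inj hp
    subst ha12
    have : (a1 : X) ∈ c1.O ∩ c2.O := ⟨ha1, ha2⟩
    rw [hO] at this
    exact this
  -- collision of two non-own attachment points
  have coll : ∀ (c1 c2 : SideSetup X A), c1.e = c2.e → (c1.O ∩ c2.O = ∅) →
      c1.LJ ∉ c1.J → c2.LJ ∉ c2.J → c1.alpha = c2.alpha → False := by
    intro c1 c2 he hO h1 h2 heq
    have heqA : (c1.e.symm ⟨c1.LJ, c1.LJ_mem_Icc⟩ : A)
        = (c2.e.symm ⟨c2.LJ, c2.LJ_mem_Icc⟩ : A) := Subtype.ext heq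
    rw [← he] at heqA
    have hLJ : c1.LJ = c2.LJ := by
      have := c1.e.symm.injective heqA
      exact congrArg Subtype.val this
    have hlt1 : c1.LJ < c1.t0 :=
      lt_of_le_of_ne c1.LJ_le_t0 (fun h => h1 (h ▸ c1.t0_mem_J))
    have hlt2 : c2.LJ < c2.t0 :=
      lt_of_le_of_ne c2.LJ_le_t0 (fun h => h2 (h ▸ c2.t0_mem_J))
    set y := min c1.t0 c2.t0 with hy
    have hy1 : y ∈ Set.Ioc c1.LJ c1.t0 := by
      constructor
      · rw [hy, lt_min_iff]; exact ⟨hlt1, hLJ ▸ hlt2⟩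
      · exact min_le_left _ _
    have hy2 : y ∈ Set.Ioc c2.LJ c2.t0 := by
      constructor
      · rw [hy, lt_min_iff]; exact ⟨hLJ ▸ hlt1, hlt2⟩
      · exact min_le_right _ _
    exact Sdisj c1 c2 he hO y (c1.J_subset_S (c1.Ioc_subset_J hy1))
      (c2.J_subset_S (c2.Ioc_subset_J hy2))
  -- collision of two "own" sides
  have ownColl : ∀ (c1 c2 : SideSetup X A), c1.e = c2.e → (c1.O ∩ c2.O = ∅) →
      c1.LJ ∈ c1.J → c2.LJ ∈ c2.J → False := by
    intro c1 c2 he hO h1 h2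
    have h01 : (0:ℝ) ∈ c1.J := by
      have := c1.LJ_eq_zero_of_mem_J h1; rw [← this]; exact h1
    have h02 : (0:ℝ) ∈ c2.J := by
      have := c2.LJ_eq_zero_of_mem_J h2; rw [← this]; exact h2
    exact Sdisj c1 c2 he hO 0 (c1.J_subset_S h01) (c2.J_subset_S h02)
  -- abbreviations
  set Lown : K → Prop := fun k => (cL k).LJ ∈ (cL k).J with hLown
  set Rown : K → Prop := fun k => (cR k).LJ ∈ (cR k).J with hRown
  set Lpt : K → X := fun k => (cL k).alpha with hLpt
  set Rpt : K → X := fun k => (cR k).alpha with hRpt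
  have FL : ∀ k, ¬ Lown k → Lpt k = (it k).a ∨ Lpt k = (it k).b := by
    intro k h
    have hnS : (cL k).LJ ∉ (cL k).S := fun hS => h ((cL k).LJ_mem_J_of_mem_S hS)
    have h1 := (cL k).alpha_mem_closure_O
    have h2 := (cL k).alpha_not_mem_O hnS
    have := (it k).bd ⟨h1, h2⟩
    simpa using this
  have FR : ∀ k, ¬ Rown k → Rpt k = (it k).a ∨ Rpt k = (it k).b := by
    intro k h
    have hnS : (cR k).LJ ∉ (cR k).S := fun hS => h ((cR k).LJ_mem_J_of_mem_S hS)
    have h1 := (cR k).alpha_mem_closure_O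
    have h2 := (cR k).alpha_not_mem_O hnS
    have := (it k).bd ⟨h1, h2⟩
    simpa using this
  have FNE : ∀ k, ¬ Lown k → ¬ Rown k → Lpt k ≠ Rpt k := by
    intro k h1 h2 heq
    have heqA : ((cL k).e.symm ⟨(cL k).LJ, (cL k).LJ_mem_Icc⟩ : A)
        = ((cR k).e.symm ⟨(cR k).LJ, (cR k).LJ_mem_Icc⟩ : A) := Subtype.ext heq
    have hclke : (cL k).e = e := rfl
    have hcrke : (cR k).e = eR := rfl
    have hval : (cL k).LJ = 1 - (cR k).LJ := by
      have h3 : (e.symm ⟨(cL k).LJ, (cL k).LJ_mem_Icc⟩ : A)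
          = (eR.symm ⟨(cR k).LJ, (cR k).LJ_mem_Icc⟩ : A) := heqA
      rw [heR] at h3
      have h4 : eR.symm ⟨(cR k).LJ, (cR k).LJ_mem_Icc⟩
          = e.symm (iccReflect.symm ⟨(cR k).LJ, (cR k).LJ_mem_Icc⟩) := rfl
      rw [heR] at h4
      rw [h4] at h3
      have h5 := e.symm.injective h3
      have h6 := congrArg Subtype.val h5
      simp [iccReflect] at h6
      linarith
    have hlt1 : (cL k).LJ < (cL k).t0 :=
      lt_of_le_of_ne (cL k).LJ_le_t0
        (fun h => h1 (show (cL k).LJ ∈ (cL k).J from h ▸ (cL k).t0_mem_J))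
    have hlt2 : (cR k).LJ < (cR k).t0 :=
      lt_of_le_of_ne (cR k).LJ_le_t0
        (fun h => h2 (show (cR k).LJ ∈ (cR k).J from h ▸ (cR k).t0_mem_J))
    have ht0R : (cR k).t0 = 1 - (cL k).t0 := by
      show ((eR (⟨(it k).m, hmA k⟩ : A)) : ℝ) = 1 - ((e (⟨(it k).m, hmA k⟩ : A)) : ℝ)
      rw [heR]
      simp [iccReflect, Homeomorph.trans_apply]
    rw [ht0R] at hlt2
    linarith
  -- the per-item bound
  have hab2 : ∀ k, (({(it k).a, (it k).b} : Finset X)).card ≤ 2 := by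
    intro k
    calc ({(it k).a, (it k).b} : Finset X).card
        ≤ ({(it k).b} : Finset X).card + 1 := Finset.card_insert_le _ _
      _ ≤ 2 := by simp
  have per : ∀ k, (({(it k).a, (it k).b} : Finset X) ∩ Y).card ≤
      (if ¬ Lown k ∧ Lpt k ∈ Y then 1 else 0) + (if ¬ Rown k ∧ Rpt k ∈ Y then 1 else 0)
      + (if Lown k then 1 else 0) + (if Rown k then 1 else 0) := by
    intro k
    have hle2 : (({(it k).a, (it k).b} : Finset X) ∩ Y).card ≤ 2 :=
      le_trans (Finset.card_le_card Finset.inter_subset_left) (hab2 k)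
    by_cases hL : Lown k <;> by_cases hR : Rown k
    · simp only [hL, hR, if_pos, not_true, false_and, if_neg, if_false]
      omega
    · -- L own, R not
      have hRab : Rpt k ∈ ({(it k).a, (it k).b} : Finset X) := by
        rcases FR k hR with h | h <;> simp [h]
      by_cases hRY : Rpt k ∈ Y
      · simp only [hL, hR, hRY, not_true, false_and, if_neg, if_false, not_false_iff,
          true_and, if_pos]
        omega
      · have hsub : ({(it k).a, (it k).b} : Finset X) ∩ Y ⊆
            ({(it k).a, (it k).b} : Finset X).erase (Rpt k) := by
          intro x hx
          rw [Finset.mem_erase]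
          rcases Finset.mem_inter.mp hx with ⟨hx1, hx2⟩
          exact ⟨fun he => hRY (he ▸ hx2), hx1⟩
        have hc : (({(it k).a, (it k).b} : Finset X) ∩ Y).card ≤ 1 := by
          calc (({(it k).a, (it k).b} : Finset X) ∩ Y).card
              ≤ (({(it k).a, (it k).b} : Finset X).erase (Rpt k)).card :=
                Finset.card_le_card hsub
            _ = ({(it k).a, (it k).b} : Finset X).card - 1 :=
                Finset.card_erase_of_mem hRab
            _ ≤ 1 := by have := hab2 k; omega
        simp only [hL, hR, hRY, and_false, if_neg, if_false, if_pos, not_true, false_and,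
          not_false_iff]
        omega
    · -- R own, L not
      have hLab : Lpt k ∈ ({(it k).a, (it k).b} : Finset X) := by
        rcases FL k hL with h | h <;> simp [h]
      by_cases hLY : Lpt k ∈ Y
      · simp only [hL, hR, hLY, not_true, false_and, if_neg, if_false, not_false_iff,
          true_and, if_pos]
        omega
      · have hsub : ({(it k).a, (it k).b} : Finset X) ∩ Y ⊆
            ({(it k).a, (it k).b} : Finset X).erase (Lpt k) := by
          intro x hx
          rw [Finset.mem_erase]
          rcases Finset.mem_inter.mp hx with ⟨hx1, hx2⟩
          exact ⟨fun he => hLY (he ▸ hx2), hx1⟩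
        have hc : (({(it k).a, (it k).b} : Finset X) ∩ Y).card ≤ 1 := by
          calc (({(it k).a, (it k).b} : Finset X) ∩ Y).card
              ≤ (({(it k).a, (it k).b} : Finset X).erase (Lpt k)).card :=
                Finset.card_le_card hsub
            _ = ({(it k).a, (it k).b} : Finset X).card - 1 :=
                Finset.card_erase_of_mem hLab
            _ ≤ 1 := by have := hab2 k; omega
        simp only [hL, hR, hLY, and_false, if_neg, if_false, if_pos, not_true, false_and,
          not_false_iff]
        omega
    · -- neither own
      have hLab : Lpt k ∈ ({(it k).a, (it k).b} : Finset X) := by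
        rcases FL k hL with h | h <;> simp [h]
      have hRab : Rpt k ∈ ({(it k).a, (it k).b} : Finset X) := by
        rcases FR k hR with h | h <;> simp [h]
      have hne := FNE k hL hR
      by_cases hLY : Lpt k ∈ Y <;> by_cases hRY : Rpt k ∈ Y
      · simp only [hL, hR, hLY, hRY, not_false_iff, true_and, if_pos]
        omega
      · have hsub : ({(it k).a, (it k).b} : Finset X) ∩ Y ⊆
            ({(it k).a, (it k).b} : Finset X).erase (Rpt k) := by
          intro x hx
          rw [Finset.mem_erase]
          rcases Finset.mem_inter.mp hx with ⟨hx1, hx2⟩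
          exact ⟨fun he => hRY (he ▸ hx2), hx1⟩
        have hc : (({(it k).a, (it k).b} : Finset X) ∩ Y).card ≤ 1 := by
          calc (({(it k).a, (it k).b} : Finset X) ∩ Y).card
              ≤ (({(it k).a, (it k).b} : Finset X).erase (Rpt k)).card :=
                Finset.card_le_card hsub
            _ = ({(it k).a, (it k).b} : Finset X).card - 1 :=
                Finset.card_erase_of_mem hRab
            _ ≤ 1 := by have := hab2 k; omega
        simp only [hL, hR, hLY, hRY, not_false_iff, true_and, and_false, if_pos, if_neg,
          if_false]
        omega
      · have hsub : ({(it k).a, (it k).b} : Finset X) ∩ Y ⊆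
            ({(it k).a, (it k).b} : Finset X).erase (Lpt k) := by
          intro x hx
          rw [Finset.mem_erase]
          rcases Finset.mem_inter.mp hx with ⟨hx1, hx2⟩
          exact ⟨fun he => hLY (he ▸ hx2), hx1⟩
        have hc : (({(it k).a, (it k).b} : Finset X) ∩ Y).card ≤ 1 := by
          calc (({(it k).a, (it k).b} : Finset X) ∩ Y).card
              ≤ (({(it k).a, (it k).b} : Finset X).erase (Lpt k)).card :=
                Finset.card_le_card hsub
            _ = ({(it k).a, (it k).b} : Finset X).card - 1 :=
                Finset.card_erase_of_mem hLab
            _ ≤ 1 := by have := hab2 k; omega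
        simp only [hL, hR, hLY, hRY, not_false_iff, true_and, and_false, if_pos, if_neg,
          if_false]
        omega
      · -- neither attachment in Y : card = 0
        have hsub : ({(it k).a, (it k).b} : Finset X) ∩ Y ⊆
            (({(it k).a, (it k).b} : Finset X).erase (Lpt k)).erase (Rpt k) := by
          intro x hx
          rcases Finset.mem_inter.mp hx with ⟨hx1, hx2⟩
          rw [Finset.mem_erase, Finset.mem_erase]
          exact ⟨fun he => hRY (he ▸ hx2), fun he => hLY (he ▸ hx2), hx1⟩
        have hRab' : Rpt k ∈ ({(it k).a, (it k).b} : Finset X).erase (Lpt k) :=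
          Finset.mem_erase.mpr ⟨Ne.symm hne, hRab⟩
        have hc : (({(it k).a, (it k).b} : Finset X) ∩ Y).card = 0 := by
          have h1 : ((({(it k).a, (it k).b} : Finset X).erase (Lpt k)).erase (Rpt k)).card
              = ({(it k).a, (it k).b} : Finset X).card - 1 - 1 := by
            rw [Finset.card_erase_of_mem hRab', Finset.card_erase_of_mem hLab]
          have := hab2 k
          have h2 := Finset.card_le_card hsub
          omega
        omega
  -- global sums
  have sumL : (∑ k : K, if ¬ Lown k ∧ Lpt k ∈ Y then 1 else 0) ≤ Y.card := by
    rw [Finset.sum_boole, Nat.cast_id]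
    apply Finset.card_le_card_of_injOn Lpt
    · intro k hk
      exact (Finset.mem_filter.mp hk).2.2
    · intro k hk l hl hkl
      by_contra hne
      exact coll (cL k) (cL l) rfl (hdisj k l hne)
        (Finset.mem_filter.mp hk).2.1 (Finset.mem_filter.mp hl).2.1 hkl
  have sumR : (∑ k : K, if ¬ Rown k ∧ Rpt k ∈ Y then 1 else 0) ≤ Y.card := by
    rw [Finset.sum_boole, Nat.cast_id]
    apply Finset.card_le_card_of_injOn Rpt
    · intro k hk
      exact (Finset.mem_filter.mp hk).2.2
    · intro k hk l hl hkl
      by_contra hne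
      exact coll (cR k) (cR l) rfl (hdisj k l hne)
        (Finset.mem_filter.mp hk).2.1 (Finset.mem_filter.mp hl).2.1 hkl
  have sumLo : (∑ k : K, if Lown k then 1 else 0) ≤ 1 := by
    rw [Finset.sum_boole, Nat.cast_id]
    rw [Finset.card_le_one]
    intro k hk l hl
    by_contra hne
    exact ownColl (cL k) (cL l) rfl (hdisj k l hne)
      (Finset.mem_filter.mp hk).2 (Finset.mem_filter.mp hl).2
  have sumRo : (∑ k : K, if Rown k then 1 else 0) ≤ 1 := by
    rw [Finset.sum_boole, Nat.cast_id]
    rw [Finset.card_le_one]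
    intro k hk l hl
    by_contra hne
    exact ownColl (cR k) (cR l) rfl (hdisj k l hne)
      (Finset.mem_filter.mp hk).2 (Finset.mem_filter.mp hl).2
  have htot : (∑ k, (({(it k).a, (it k).b} : Finset X) ∩ Y).card) ≤ 2 * Y.card + 2 := by
    calc (∑ k, (({(it k).a, (it k).b} : Finset X) ∩ Y).card)
        ≤ ∑ k : K, ((if ¬ Lown k ∧ Lpt k ∈ Y then 1 else 0)
            + (if ¬ Rown k ∧ Rpt k ∈ Y then 1 else 0)
            + (if Lown k then 1 else 0) + (if Rown k then 1 else 0)) :=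
          Finset.sum_le_sum (fun k _ => per k)
      _ = (∑ k : K, if ¬ Lown k ∧ Lpt k ∈ Y then 1 else 0)
            + (∑ k : K, if ¬ Rown k ∧ Rpt k ∈ Y then 1 else 0)
            + (∑ k : K, if Lown k then 1 else 0)
            + (∑ k : K, if Rown k then 1 else 0) := by
          rw [Finset.sum_add_distrib, Finset.sum_add_distrib, Finset.sum_add_distrib]
      _ ≤ Y.card + Y.card + 1 + 1 := by
          exact add_le_add (add_le_add (add_le_add sumL sumR) sumLo) sumRo
      _ = 2 * Y.card + 2 := by ring
  omega


/-! ### Basic facts about `TopGraph` -/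

section TopGraphBasics

variable {X : Type*} [TopologicalSpace X] [T2Space X] (G : TopGraph X)

instance : CompactSpace (Set.Icc (0:ℝ) 1) := isCompact_iff_compactSpace.mp isCompact_Icc

/-- endpoint of an edge -/
def ep (i : Fin G.n) (b : Bool) : X := G.edge i (bif b then i1 else i0)

lemma i0_ne_i1 : (i0 : Set.Icc (0:ℝ) 1) ≠ i1 := by
  intro h
  have : (0:ℝ) = 1 := congrArg Subtype.val h
  norm_num at this

lemma ep_ne (i : Fin G.n) : ep G i false ≠ ep G i true := by
  intro h
  exact i0_ne_i1 ((G.emb i).injective h)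

lemma ep_mem_range (i : Fin G.n) (b : Bool) : ep G i b ∈ Set.range (G.edge i) :=
  ⟨_, rfl⟩

lemma isClosed_range_edge (i : Fin G.n) : IsClosed (Set.range (G.edge i)) :=
  (isCompact_range (G.emb i).continuous).isClosed

lemma exists_edge (x : X) : ∃ i, x ∈ Set.range (G.edge i) := by
  have : x ∈ (⋃ i, Set.range (G.edge i)) := by rw [G.cover]; trivial
  exact Set.mem_iUnion.mp this

lemma meet' {i j : Fin G.n} (h : i ≠ j) {x : X}
    (hxi : x ∈ Set.range (G.edge i)) (hxj : x ∈ Set.range (G.edge j)) :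
    ∃ b, ep G j b = x := by
  rcases (G.meet i j h x ⟨hxi, hxj⟩).2 with h' | h'
  · exact ⟨false, h'.symm⟩
  · exact ⟨true, h'.symm⟩

/-- if a vertex lies on the range of an edge, it is one of its endpoints. -/
lemma vertex_mem_range {x : X} {j : Fin G.n} {b : Bool} (hx : ep G j b = x)
    {i : Fin G.n} (hxi : x ∈ Set.range (G.edge i)) : ∃ b', ep G i b' = x := by
  by_cases hij : i = j
  · subst hij; exact ⟨b, hx⟩
  · exact meet' G (Ne.symm hij) (hx ▸ ep_mem_range G j b) hxi

/-- the set of incidences at a point -/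
noncomputable def inc (x : X) : Finset (Fin G.n × Bool) :=
  Finset.univ.filter (fun p => ep G p.1 p.2 = x)

lemma degree_eq_card_inc (x : X) : G.degree x = (inc G x).card := by
  unfold TopGraph.degree inc
  rw [Finset.card_filter]
  rw [Fintype.sum_prod_type]
  apply Finset.sum_congr rfl
  intro i _
  rw [Fintype.sum_bool]
  simp only [ep]
  by_cases h0 : G.edge i i0 = x <;> by_cases h1 : G.edge i i1 = x <;>
    simp [h0, h1]

lemma branch_card {x : X} (h : G.IsBranchPoint x) : 3 ≤ (inc G x).card := by
  have := h
  unfold TopGraph.IsBranchPoint at this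
  rwa [degree_eq_card_inc] at this

lemma branch_is_vertex {x : X} (h : G.IsBranchPoint x) : ∃ i b, ep G i b = x := by
  have h3 := branch_card G h
  have : (inc G x).Nonempty := Finset.card_pos.mp (by omega)
  obtain ⟨⟨i, b⟩, hib⟩ := this
  exact ⟨i, b, (Finset.mem_filter.mp hib).2⟩

/-- the open interior of an edge -/
def eInt (i : Fin G.n) : Set X :=
  Set.range (G.edge i) \ {ep G i false, ep G i true}

lemma isOpen_eInt (i : Fin G.n) : IsOpen (eInt G i) := by
  have hcompl : (eInt G i)ᶜ =
      (⋃ j ∈ {j : Fin G.n | j ≠ i}, Set.range (G.edge j)) ∪ {ep G i false, ep G i true} := by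
    ext x
    simp only [Set.mem_compl_iff, eInt, Set.mem_diff, Set.mem_union, Set.mem_iUnion,
      Set.mem_setOf_eq, not_and_or, not_not]
    constructor
    · rintro (hx | hx)
      · obtain ⟨j, hj⟩ := exists_edge G x
        by_cases hij : j = i
        · subst hij; exact absurd hj hx
        · exact Or.inl ⟨j, hij, hj⟩
      · exact Or.inr hx
    · rintro (⟨j, hji, hj⟩ | hx)
      · by_cases hxr : x ∈ Set.range (G.edge i)
        · right
          rcases (G.meet j i hji x ⟨hj, hxr⟩).2 with h' | h'
          · left; rw [h']; rfl
          · right; rw [h']; rfl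
        · exact Or.inl hxr
      · exact Or.inr hx
  rw [← isClosed_compl_iff, hcompl]
  apply IsClosed.union
  · exact Set.Finite.isClosed_biUnion (Set.toFinite _)
      (fun j _ => isClosed_range_edge G j)
  · exact (Set.finite_singleton _).insert _ |>.isClosed

/-- midpoint of an edge -/
noncomputable def mid (i : Fin G.n) : X := G.edge i ⟨1/2, by norm_num⟩

lemma mid_mem_eInt (i : Fin G.n) : mid G i ∈ eInt G i := by
  refine ⟨⟨_, rfl⟩, ?_⟩
  intro hmem
  rcases hmem with h | h
  · have := (G.emb i).injective (show G.edge i _ = G.edge i i0 from h)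
    have := congrArg Subtype.val this
    norm_num [i0] at this
  · have h' : mid G i = ep G i true := h
    have := (G.emb i).injective (show G.edge i _ = G.edge i i1 from h')
    have := congrArg Subtype.val this
    norm_num [i1] at this

lemma eInt_closure_diff (i : Fin G.n) :
    closure (eInt G i) \ eInt G i ⊆ {ep G i false, ep G i true} := by
  intro x hx
  have h1 : x ∈ Set.range (G.edge i) := by
    have := closure_mono (Set.diff_subset (t := {ep G i false, ep G i true})) hx.1
    rwa [(isClosed_range_edge G i).closure_eq] at this
  by_contra hne
  exact hx.2 ⟨h1, hne⟩

lemma eInt_disjoint {i j : Fin G.n} (h : i ≠ j) : eInt G i ∩ eInt G j = ∅ := by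
  ext x
  simp only [Set.mem_inter_iff, Set.mem_empty_iff_false, iff_false, not_and]
  intro hxi hxj
  rcases (G.meet i j h x ⟨hxi.1, hxj.1⟩).2 with h' | h'
  · exact hxj.2 (by rw [h']; exact Or.inl rfl)
  · exact hxj.2 (by rw [h']; exact Or.inr rfl)

end TopGraphBasics


set_option linter.unusedSectionVars false

/-! ### The combinatorial graph of a `TopGraph` and its connectivity -/

section GraphStructure

variable {X : Type*} [TopologicalSpace X] [T2Space X] (G : TopGraph X)

/-- the simple graph on `X` whose edges are the edges of `G`. -/
def Gr : SimpleGraph X where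
  Adj x y := x ≠ y ∧ ∃ i : Fin G.n,
    (ep G i false = x ∧ ep G i true = y) ∨ (ep G i false = y ∧ ep G i true = x)
  symm := by
    constructor
    rintro x y ⟨h, i, hi⟩
    exact ⟨h.symm, i, hi.symm⟩
  loopless := ⟨fun x h => h.1 rfl⟩

lemma adj_of_edge (i : Fin G.n) : (Gr G).Adj (ep G i false) (ep G i true) :=
  ⟨ep_ne G i, i, Or.inl ⟨rfl, rfl⟩⟩

lemma adj_ends {x y : X} (h : (Gr G).Adj x y) :
    ∃ i : Fin G.n, (ep G i false = x ∧ ep G i true = y) ∨ (ep G i false = y ∧ ep G i true = x) :=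
  h.2

/-- a chosen edge witnessing an adjacency. -/
noncomputable def wit {x y : X} (h : (Gr G).Adj x y) : Fin G.n := h.2.choose

lemma wit_spec {x y : X} (h : (Gr G).Adj x y) :
    (ep G (wit G h) false = x ∧ ep G (wit G h) true = y) ∨
    (ep G (wit G h) false = y ∧ ep G (wit G h) true = x) := h.2.choose_spec

lemma wit_ep_cases {x y : X} (h : (Gr G).Adj x y) (b : Bool) :
    ep G (wit G h) b = x ∨ ep G (wit G h) b = y := by
  rcases wit_spec G h with ⟨h1, h2⟩ | ⟨h1, h2⟩ <;> cases b <;> simp [h1, h2]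

lemma mem_range_wit_left {x y : X} (h : (Gr G).Adj x y) :
    x ∈ Set.range (G.edge (wit G h)) := by
  rcases wit_spec G h with ⟨h1, _⟩ | ⟨_, h2⟩
  · exact ⟨_, h1⟩
  · exact ⟨_, h2⟩

lemma mem_range_wit_right {x y : X} (h : (Gr G).Adj x y) :
    y ∈ Set.range (G.edge (wit G h)) := by
  rcases wit_spec G h with ⟨_, h2⟩ | ⟨h1, _⟩
  · exact ⟨_, h2⟩
  · exact ⟨_, h1⟩

lemma reachable_ep_bool {i : Fin G.n} (b b' : Bool) :
    (Gr G).Reachable (ep G i b) (ep G i b') := by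
  cases b <;> cases b'
  · exact SimpleGraph.Reachable.refl _
  · exact (adj_of_edge G i).reachable
  · exact (adj_of_edge G i).symm.reachable
  · exact SimpleGraph.Reachable.refl _

/-- connectivity of the combinatorial graph between vertices. -/
lemma reach_vertex [ConnectedSpace X] {x y : X}
    (hx : ∃ i b, ep G i b = x) (hy : ∃ i b, ep G i b = y) :
    (Gr G).Reachable x y := by
  classical
  obtain ⟨ix, bx, hix⟩ := hx
  obtain ⟨iy, by', hiy⟩ := hy
  set S : Set (Fin G.n) := {i | (Gr G).Reachable x (ep G i false)} with hS
  have hSiff : ∀ i b, i ∈ S ↔ (Gr G).Reachable x (ep G i b) := by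
    intro i b
    constructor
    · intro h; exact h.trans (reachable_ep_bool G false b)
    · intro h; exact h.trans (reachable_ep_bool G b false)
  set U : Set X := ⋃ i ∈ S, Set.range (G.edge i) with hU
  set U' : Set X := ⋃ i ∈ Sᶜ, Set.range (G.edge i) with hU'
  have hUclosed : IsClosed U :=
    Set.Finite.isClosed_biUnion (Set.toFinite _) (fun j _ => isClosed_range_edge G j)
  have hU'closed : IsClosed U' :=
    Set.Finite.isClosed_biUnion (Set.toFinite _) (fun j _ => isClosed_range_edge G j)
  have hdisj : U ∩ U' = ∅ := by
    ext z
    simp only [Set.mem_inter_iff, Set.mem_empty_iff_false, iff_false, not_and]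
    intro hz1 hz2
    obtain ⟨i, hiS, hzi⟩ := Set.mem_iUnion₂.mp hz1
    obtain ⟨j, hjS, hzj⟩ := Set.mem_iUnion₂.mp hz2
    have hij : i ≠ j := by rintro rfl; exact hjS hiS
    have hreach : (Gr G).Reachable x z := by
      rcases (G.meet i j hij z ⟨hzi, hzj⟩).1 with h' | h'
      · rw [show z = ep G i false from h']; exact (hSiff i false).mp hiS
      · rw [show z = ep G i true from h']; exact (hSiff i true).mp hiS
    apply hjS
    rcases (G.meet i j hij z ⟨hzi, hzj⟩).2 with h' | h'
    · exact (hSiff j false).mpr (show (Gr G).Reachable x (ep G j false) by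
        rw [show ep G j false = z from h'.symm]; exact hreach)
    · exact (hSiff j true).mpr (show (Gr G).Reachable x (ep G j true) by
        rw [show ep G j true = z from h'.symm]; exact hreach)
  have hcover : U ∪ U' = Set.univ := by
    ext z
    simp only [Set.mem_union, Set.mem_univ, iff_true]
    obtain ⟨i, hi⟩ := exists_edge G z
    by_cases h : i ∈ S
    · exact Or.inl (Set.mem_biUnion h hi)
    · exact Or.inr (Set.mem_biUnion h hi)
  have hUopen : IsOpen U := by
    have : Uᶜ = U' := by
      apply Set.eq_of_subset_of_subset
      · intro z hz
        have : z ∈ U ∪ U' := hcover ▸ Set.mem_univ z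
        rcases this with h | h
        · exact absurd h hz
        · exact h
      · intro z hz hzU
        have : z ∈ U ∩ U' := ⟨hzU, hz⟩
        rw [hdisj] at this
        exact this
    rw [← isClosed_compl_iff, this]
    exact hU'closed
  have hUnonempty : U.Nonempty := by
    refine ⟨x, Set.mem_biUnion ?_ (hix ▸ ep_mem_range G ix bx)⟩
    apply (hSiff ix bx).mpr
    rw [hix]
  have hUuniv : U = Set.univ := (IsClopen.eq_univ ⟨hUclosed, hUopen⟩) hUnonempty
  have hyU : y ∈ U := hUuniv ▸ Set.mem_univ y
  obtain ⟨j, hjS, hyj⟩ := Set.mem_iUnion₂.mp hyU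
  obtain ⟨b'', hb''⟩ := vertex_mem_range G hiy hyj
  have := (hSiff j b'').mp hjS
  rwa [hb''] at this

end GraphStructure


/-! ### General walk lemmas -/

section WalkLemmas

open SimpleGraph

variable {V : Type*} {H : SimpleGraph V}

/-- at most one dart of a path touches an endpoint of the path. -/
lemma endpoint_dart_unique :
    ∀ {a b : V} (p : H.Walk a b), p.IsPath → ∀ (x : V), (x = a ∨ x = b) →
    ∀ d1 ∈ p.darts, ∀ d2 ∈ p.darts,
    (x = d1.toProd.1 ∨ x = d1.toProd.2) → (x = d2.toProd.1 ∨ x = d2.toProd.2) → d1 = d2 := by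
  intro a b p
  induction p with
  | nil => intro _ x _ d1 hd1; simp [Walk.darts_nil] at hd1
  | @cons a s b h q ih =>
    intro hp x hx d1 hd1 d2 hd2 ht1 ht2
    have hq : q.IsPath := hp.of_cons
    have hans : a ∉ q.support := ((Walk.cons_isPath_iff _ _).mp hp).2
    rw [Walk.darts_cons, List.mem_cons] at hd1 hd2
    have notouch_a : ∀ d ∈ q.darts, ¬ (a = d.toProd.1 ∨ a = d.toProd.2) := by
      intro d hd hcon
      rcases hcon with h' | h'
      · exact hans (h' ▸ Walk.dart_fst_mem_support_of_mem_darts q hd)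
      · exact hans (h' ▸ Walk.dart_snd_mem_support_of_mem_darts q hd)
    by_cases hxa : x = a
    · subst hxa
      rcases hd1 with rfl | hd1
      · rcases hd2 with rfl | hd2
        · rfl
        · exact absurd ht2 (notouch_a d2 hd2)
      · exact absurd ht1 (notouch_a d1 hd1)
    · -- x = b
      have hxb : x = b := hx.resolve_left hxa
      by_cases hsb : s = b
      · -- q is a path from b to b, hence nil
        have hqnil : q.darts = [] := by
          cases q with
          | nil => rfl
          | cons h' q' =>
            exfalso
            have := ((Walk.cons_isPath_iff _ _).mp hq).2
            subst hsb
            exact this (Walk.end_mem_support q')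
        rcases hd1 with rfl | hd1
        · rcases hd2 with rfl | hd2
          · rfl
          · rw [hqnil] at hd2; simp at hd2
        · rw [hqnil] at hd1; simp at hd1
      · -- s ≠ b : the first dart does not touch x = b
        have hd0 : ∀ (hh : x = a ∨ x = s), False := by
          rintro (h' | h')
          · exact hxa h'
          · rw [hxb] at h'; exact hsb h'.symm
        rcases hd1 with rfl | hd1
        · exact absurd ht1 (fun hh => hd0 hh)
        · rcases hd2 with rfl | hd2
          · exact absurd ht2 (fun hh => hd0 hh)
          · exact ih hq x (Or.inr hxb) d1 hd1 d2 hd2 ht1 ht2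

/-- an internal vertex of a path has an incoming and an outgoing dart with
distinct far ends. -/
lemma internal_darts :
    ∀ {a b : V} (p : H.Walk a b), p.IsPath → ∀ x ∈ p.support, x ≠ a → x ≠ b →
    ∃ d1 ∈ p.darts, ∃ d2 ∈ p.darts,
      d1.toProd.2 = x ∧ d2.toProd.1 = x ∧ d1.toProd.1 ≠ d2.toProd.2 := by
  intro a b p
  induction p with
  | nil =>
    intro _ x hx hxa _
    rw [Walk.support_nil] at hx
    simp at hx
    exact absurd hx hxa
  | @cons a s b h q ih =>
    intro hp x hx hxa hxb
    have hq : q.IsPath := hp.of_cons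
    have hans : a ∉ q.support := ((Walk.cons_isPath_iff _ _).mp hp).2
    rw [Walk.support_cons, List.mem_cons] at hx
    rcases hx with rfl | hx
    · exact absurd rfl hxa
    · by_cases hxs : x = s
      · subst hxs
        cases q with
        | nil => exact absurd rfl hxb
        | @cons s s'' b h' q'' =>
          refine ⟨⟨(a, x), h⟩, ?_, ⟨(x, s''), h'⟩, ?_, rfl, rfl, ?_⟩
          · rw [Walk.darts_cons]; exact List.mem_cons_self
          · rw [Walk.darts_cons, Walk.darts_cons]
            exact List.mem_cons_of_mem _ (List.mem_cons_self)
          · intro hcon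
            apply hans
            have hcon' : a = s'' := hcon
            rw [hcon', Walk.support_cons]
            exact List.mem_cons_of_mem _ (Walk.start_mem_support q'')
      · obtain ⟨d1, hd1, d2, hd2, h1, h2, h3⟩ := ih hq x hx hxs hxb
        refine ⟨d1, ?_, d2, ?_, h1, h2, h3⟩
        · rw [Walk.darts_cons]; exact List.mem_cons_of_mem _ hd1
        · rw [Walk.darts_cons]; exact List.mem_cons_of_mem _ hd2

/-- a prefix path stopping at the first hit of a target set. -/
lemma firstHit [DecidableEq V] :
    ∀ {x y : V} (q : H.Walk x y) (T : Set V), y ∈ T →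
    ∃ z, z ∈ T ∧ ∃ q' : H.Walk x z, q'.IsPath ∧ (∀ t ∈ q'.support, t ∈ T → t = z) := by
  intro x y q
  induction q with
  | @nil u =>
    intro T hy
    refine ⟨u, hy, Walk.nil, by simp, ?_⟩
    intro t ht _
    rw [Walk.support_nil] at ht
    simpa using ht
  | @cons x s y h p ih =>
    intro T hy
    by_cases hx : x ∈ T
    · refine ⟨x, hx, Walk.nil, by simp, ?_⟩
      intro t ht _
      rw [Walk.support_nil] at ht
      simpa using ht
    · obtain ⟨z, hz, q'', hq'', hprop⟩ := ih T hy
      refine ⟨z, hz, (Walk.cons h q'').bypass, Walk.bypass_isPath _, ?_⟩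
      intro t ht hT
      have := Walk.support_bypass_subset _ ht
      rw [Walk.support_cons, List.mem_cons] at this
      rcases this with rfl | hmem
      · exact absurd hT hx
      · exact hprop t hmem hT

/-- a prefix path from `z` to the first vertex satisfying `P`. -/
lemma firstSat (P : V → Prop) :
    ∀ {z b : V} (r : H.Walk z b), r.IsPath → P b → z ≠ b →
    ∃ u, P u ∧ u ≠ z ∧ ∃ r' : H.Walk z u, r'.IsPath ∧
      (∀ t ∈ r'.support, t ≠ z → t ≠ u → ¬ P t) ∧ (∀ t ∈ r'.support, t ∈ r.support) := by
  intro z b r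
  induction r with
  | nil => intro _ _ hzb; exact absurd rfl hzb
  | @cons z s b h p ih =>
    intro hp hPb hzb
    have hq : p.IsPath := hp.of_cons
    have hzns : z ∉ p.support := ((Walk.cons_isPath_iff _ _).mp hp).2
    by_cases hPs : P s
    · refine ⟨s, hPs, (H.ne_of_adj h).symm, Walk.cons h Walk.nil, ?_, ?_, ?_⟩
      · rw [Walk.isPath_def, Walk.support_cons, Walk.support_nil]
        simp [H.ne_of_adj h]
      · intro t ht htz hts
        rw [Walk.support_cons, Walk.support_nil, List.mem_cons] at ht
        rcases ht with rfl | ht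
        · exact absurd rfl htz
        · simp at ht; exact absurd ht hts
      · intro t ht
        rw [Walk.support_cons, Walk.support_nil, List.mem_cons] at ht
        rw [Walk.support_cons, List.mem_cons]
        rcases ht with rfl | ht
        · exact Or.inl rfl
        · simp at ht; subst ht
          exact Or.inr (Walk.start_mem_support p)
    · have hsb : s ≠ b := by rintro rfl; exact hPs hPb
      obtain ⟨u, hPu, hus, r'', hr'', hint, hsub⟩ := ih hq hPb hsb
      have huns : u ∈ p.support := hsub u (Walk.end_mem_support r'')
      have huz : u ≠ z := fun h' => hzns (h' ▸ huns)
      refine ⟨u, hPu, huz, Walk.cons h r'', ?_, ?_, ?_⟩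
      · rw [Walk.cons_isPath_iff]
        exact ⟨hr'', fun hmem => hzns (hsub z hmem)⟩
      · intro t ht htz htu
        rw [Walk.support_cons, List.mem_cons] at ht
        rcases ht with rfl | ht
        · exact absurd rfl htz
        · by_cases hts : t = s
          · subst hts; exact hPs
          · exact hint t ht hts htu
      · intro t ht
        rw [Walk.support_cons, List.mem_cons] at ht
        rw [Walk.support_cons, List.mem_cons]
        rcases ht with rfl | ht
        · exact Or.inl rfl
        · exact Or.inr (hsub t ht)

end WalkLemmas


/-! ### helper lemmas for walks, continued -/

section MoreWalk

open SimpleGraph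

variable {V : Type*} {H : SimpleGraph V}

lemma lastDart :
    ∀ {a b : V} (p : H.Walk a b), a ≠ b → ∃ d ∈ p.darts, d.toProd.2 = b := by
  intro a b p
  induction p with
  | nil => intro h; exact absurd rfl h
  | @cons a s b h q ih =>
    intro _
    by_cases hsb : s = b
    · refine ⟨⟨(a, s), h⟩, ?_, hsb⟩
      rw [Walk.darts_cons]; exact List.mem_cons_self
    · obtain ⟨d, hd, hd2⟩ := ih hsb
      refine ⟨d, ?_, hd2⟩
      rw [Walk.darts_cons]; exact List.mem_cons_of_mem _ hd

lemma takeUntil_dropUntil_inter [DecidableEq V] {a b z : V} {p : H.Walk a b}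
    (hp : p.IsPath) (hz : z ∈ p.support) :
    ∀ t, t ∈ (p.takeUntil z hz).support → t ∈ (p.dropUntil z hz).support → t = z := by
  have hspec := p.take_spec hz
  have hnodup : p.support.Nodup := hp.support_nodup
  rw [← hspec, Walk.support_append] at hnodup
  intro t ht1 ht2
  by_contra hne
  have htail : t ∈ (p.dropUntil z hz).support.tail := by
    have := (p.dropUntil z hz).support_eq_cons
    rw [this, List.mem_cons] at ht2
    rcases ht2 with rfl | ht2
    · exact absurd rfl hne
    · exact ht2
  exact (List.disjoint_of_nodup_append hnodup) ht1 htail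

end MoreWalk

/-! ### the configuration: three branch points joined by branch-free paths -/

section Config

variable {X : Type*} [TopologicalSpace X] [T2Space X] (G : TopGraph X)

lemma three_le_card {α : Type*} [DecidableEq α] {s : Finset α} {a b c : α}
    (ha : a ∈ s) (hb : b ∈ s) (hc : c ∈ s) (hab : a ≠ b) (hac : a ≠ c) (hbc : b ≠ c) :
    3 ≤ s.card := by
  have hsub : ({a, b, c} : Finset α) ⊆ s := by
    intro x hx
    simp only [Finset.mem_insert, Finset.mem_singleton] at hx
    rcases hx with rfl | rfl | rfl <;> assumption
  have hcard : ({a, b, c} : Finset α).card = 3 := by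
    rw [Finset.card_insert_of_notMem (by simp [hab, hac]),
      Finset.card_insert_of_notMem (by simp [hbc]), Finset.card_singleton]
  rw [← hcard]
  exact Finset.card_le_card hsub

lemma branch_of_card {x : X} (h : 3 ≤ (inc G x).card) : G.IsBranchPoint x := by
  unfold TopGraph.IsBranchPoint
  rwa [degree_eq_card_inc]

lemma dart_inc (d : (Gr G).Dart) {z : X} (hz : z = d.toProd.1 ∨ z = d.toProd.2) :
    ∃ b, ep G (wit G d.adj) b = z := by
  rcases wit_spec G d.adj with ⟨h1, h2⟩ | ⟨h1, h2⟩ <;> rcases hz with rfl | rfl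
  · exact ⟨false, h1⟩
  · exact ⟨true, h2⟩
  · exact ⟨true, h2⟩
  · exact ⟨false, h1⟩

lemma wit_eq_endpoints {x y x' y' : X} (h : (Gr G).Adj x y) (h' : (Gr G).Adj x' y')
    (heq : wit G h = wit G h') : (x = x' ∧ y = y') ∨ (x = y' ∧ y = x') := by
  rcases wit_spec G h with ⟨h1, h2⟩ | ⟨h1, h2⟩ <;>
    rcases wit_spec G h' with ⟨h1', h2'⟩ | ⟨h1', h2'⟩ <;>
    rw [heq] at h1 h2
  · exact Or.inl ⟨h1' ▸ h1.symm ▸ rfl, h2' ▸ h2.symm ▸ rfl⟩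
  · exact Or.inr ⟨h1' ▸ h1.symm ▸ rfl, h2' ▸ h2.symm ▸ rfl⟩
  · exact Or.inr ⟨h2' ▸ h2.symm ▸ rfl, h1' ▸ h1.symm ▸ rfl⟩
  · exact Or.inl ⟨h2' ▸ h2.symm ▸ rfl, h1' ▸ h1.symm ▸ rfl⟩

/-- from two internally branch-free legs at a branch point, the configuration. -/
lemma fromLegs {z c1 c2 : X} (hz : G.IsBranchPoint z)
    {L1 : (Gr G).Walk z c1} {L2 : (Gr G).Walk z c2}
    (h1 : L1.IsPath) (h2 : L2.IsPath) (hc1 : G.IsBranchPoint c1) (hc2 : G.IsBranchPoint c2)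
    (hz1 : z ≠ c1) (hz2 : z ≠ c2)
    (hdisj : ∀ t, t ∈ L1.support → t ∈ L2.support → t = z) :
    ∃ (u v w : X), ∃ (p1 : (Gr G).Walk v u) (p2 : (Gr G).Walk v w),
      u ≠ v ∧ u ≠ w ∧ v ≠ w ∧
      G.IsBranchPoint u ∧ G.IsBranchPoint v ∧ G.IsBranchPoint w ∧
      p1.IsPath ∧ p2.IsPath ∧
      (∀ t ∈ p1.support, t ≠ v → t ≠ u → ¬ G.IsBranchPoint t) ∧
      (∀ t ∈ p2.support, t ≠ v → t ≠ w → ¬ G.IsBranchPoint t) ∧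
      (∀ t, t ∈ p1.support → t ∈ p2.support → t = v) := by
  obtain ⟨u, hu, huz, π1, hπ1, hint1, hsub1⟩ := firstSat G.IsBranchPoint L1 h1 hc1 hz1
  obtain ⟨w, hw, hwz, π2, hπ2, hint2, hsub2⟩ := firstSat G.IsBranchPoint L2 h2 hc2 hz2
  have huw : u ≠ w := by
    intro he
    apply huz
    apply hdisj u (hsub1 u (SimpleGraph.Walk.end_mem_support π1))
    rw [he]
    exact hsub2 w (SimpleGraph.Walk.end_mem_support π2)
  refine ⟨u, z, w, π1, π2, huz, huw, Ne.symm hwz, hu, hz, hw, hπ1, hπ2, hint1, hint2, ?_⟩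
  intro t ht1 ht2
  exact hdisj t (hsub1 t ht1) (hsub2 t ht2)

lemma config [ConnectedSpace X]
    (h3 : ∃ x y z : X, x ≠ y ∧ x ≠ z ∧ y ≠ z ∧
      G.IsBranchPoint x ∧ G.IsBranchPoint y ∧ G.IsBranchPoint z) :
    ∃ (u v w : X), ∃ (p1 : (Gr G).Walk v u) (p2 : (Gr G).Walk v w),
      u ≠ v ∧ u ≠ w ∧ v ≠ w ∧
      G.IsBranchPoint u ∧ G.IsBranchPoint v ∧ G.IsBranchPoint w ∧
      p1.IsPath ∧ p2.IsPath ∧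
      (∀ t ∈ p1.support, t ≠ v → t ≠ u → ¬ G.IsBranchPoint t) ∧
      (∀ t ∈ p2.support, t ≠ v → t ≠ w → ¬ G.IsBranchPoint t) ∧
      (∀ t, t ∈ p1.support → t ∈ p2.support → t = v) := by
  classical
  obtain ⟨b1, b2, b3, h12, h13, h23, hb1, hb2, hb3⟩ := h3
  -- walks
  have hr12 : (Gr G).Reachable b1 b2 :=
    reach_vertex G (branch_is_vertex G hb1) (branch_is_vertex G hb2)
  have hr31 : (Gr G).Reachable b3 b1 :=
    reach_vertex G (branch_is_vertex G hb3) (branch_is_vertex G hb1)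
  obtain ⟨w12⟩ := hr12
  obtain ⟨w31⟩ := hr31
  set p' := w12.bypass with hp'def
  have hp' : p'.IsPath := SimpleGraph.Walk.bypass_isPath w12
  have hb1p' : b1 ∈ p'.support := SimpleGraph.Walk.start_mem_support p'
  obtain ⟨z, hzT, q', hq', hq'prop⟩ :=
    firstHit w31 {t | t ∈ p'.support} hb1p'
  have hzp' : z ∈ p'.support := hzT
  -- z is a branch point
  have hzbranch : G.IsBranchPoint z := by
    by_cases hz1 : z = b1
    · rwa [hz1]
    by_cases hz2 : z = b2
    · rwa [hz2]
    by_cases hz3 : z = b3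
    · rwa [hz3]
    -- z is internal in p' and q' is nonempty
    obtain ⟨d1, hd1, d2, hd2, hd1s, hd2f, hdne⟩ :=
      internal_darts p' hp' z hzp' hz1 hz2
    obtain ⟨d3, hd3, hd3s⟩ := lastDart q' (fun h => hz3 h.symm)
    obtain ⟨β1, hβ1⟩ := dart_inc G d1 (Or.inr hd1s.symm)
    obtain ⟨β2, hβ2⟩ := dart_inc G d2 (Or.inl hd2f.symm)
    obtain ⟨β3, hβ3⟩ := dart_inc G d3 (Or.inr hd3s.symm)
    have hd3fp' : d3.toProd.1 ∉ p'.support := by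
      intro hmem
      have h' : d3.toProd.1 = z :=
        hq'prop _ (SimpleGraph.Walk.dart_fst_mem_support_of_mem_darts q' hd3) hmem
      exact d3.adj.ne (h'.trans hd3s.symm)
    have he12 : wit G d1.adj ≠ wit G d2.adj := by
      intro heq
      rcases wit_eq_endpoints G d1.adj d2.adj heq with ⟨ha, _⟩ | ⟨ha, _⟩
      · exact d1.adj.ne (by rw [ha, hd2f, hd1s])
      · exact hdne ha
    have he13 : wit G d1.adj ≠ wit G d3.adj := by
      intro heq
      rcases wit_eq_endpoints G d1.adj d3.adj heq with ⟨ha, _⟩ | ⟨ha, _⟩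
      · exact hd3fp' (ha ▸ SimpleGraph.Walk.dart_fst_mem_support_of_mem_darts p' hd1)
      · exact d1.adj.ne (by rw [ha, hd3s, hd1s])
    have he23 : wit G d2.adj ≠ wit G d3.adj := by
      intro heq
      rcases wit_eq_endpoints G d2.adj d3.adj heq with ⟨ha, _⟩ | ⟨_, hb⟩
      · exact d3.adj.ne (by rw [← ha, hd2f, hd3s])
      · exact hd3fp' (hb ▸ SimpleGraph.Walk.dart_snd_mem_support_of_mem_darts p' hd2)
    apply branch_of_card G
    apply three_le_card (a := (wit G d1.adj, β1)) (b := (wit G d2.adj, β2))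
      (c := (wit G d3.adj, β3))
    · exact Finset.mem_filter.mpr ⟨Finset.mem_univ _, hβ1⟩
    · exact Finset.mem_filter.mpr ⟨Finset.mem_univ _, hβ2⟩
    · exact Finset.mem_filter.mpr ⟨Finset.mem_univ _, hβ3⟩
    · exact fun h => he12 (congrArg Prod.fst h)
    · exact fun h => he13 (congrArg Prod.fst h)
    · exact fun h => he23 (congrArg Prod.fst h)
  -- case analysis on the position of z to produce two legs
  by_cases hz1 : z = b1
  · -- legs p' : z → b2 and q'.reverse : z → b3
    have hL1 : (p'.copy hz1.symm rfl).IsPath := by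
      rw [SimpleGraph.Walk.isPath_copy]; exact hp'
    have hL2 : q'.reverse.IsPath := hq'.reverse
    refine fromLegs G hzbranch hL1 hL2 hb2 hb3 (hz1 ▸ h12) (hz1 ▸ h13) ?_
    intro t ht1 ht2
    rw [SimpleGraph.Walk.support_copy] at ht1
    rw [SimpleGraph.Walk.support_reverse, List.mem_reverse] at ht2
    exact hq'prop t ht2 ht1
  · by_cases hz2 : z = b2
    · -- legs p'.reverse : z → b1 and q'.reverse : z → b3
      have hL1 : (p'.reverse.copy hz2.symm rfl).IsPath := by
        rw [SimpleGraph.Walk.isPath_copy]; exact hp'.reverse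
      have hL2 : q'.reverse.IsPath := hq'.reverse
      refine fromLegs G hzbranch hL1 hL2 hb1 hb3 (fun h => hz1 h) (hz2 ▸ h23) ?_
      intro t ht1 ht2
      rw [SimpleGraph.Walk.support_copy, SimpleGraph.Walk.support_reverse,
        List.mem_reverse] at ht1
      rw [SimpleGraph.Walk.support_reverse, List.mem_reverse] at ht2
      exact hq'prop t ht2 ht1
    · -- z is internal in p' ; legs from takeUntil and dropUntil
      have hL1 : (p'.takeUntil z hzp').reverse.IsPath := (hp'.takeUntil hzp').reverse
      have hL2 : (p'.dropUntil z hzp').IsPath := hp'.dropUntil hzp'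
      refine fromLegs G hzbranch hL1 hL2 hb1 hb2 (fun h => hz1 h) (fun h => hz2 h) ?_
      intro t ht1 ht2
      rw [SimpleGraph.Walk.support_reverse, List.mem_reverse] at ht1
      exact takeUntil_dropUntil_inter hp' hzp' t ht1 ht2

end Config


/-! ### chains as subsets of `X` -/

section Chain

open SimpleGraph

variable {X : Type*} [TopologicalSpace X] [T2Space X] (G : TopGraph X)

/-- the edges used by a walk. -/
noncomputable def wits {v u : X} (p : (Gr G).Walk v u) : List (Fin G.n) :=
  p.darts.map (fun d => wit G d.adj)

lemma mem_wits {v u : X} {p : (Gr G).Walk v u} {i : Fin G.n} :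
    i ∈ wits G p ↔ ∃ d ∈ p.darts, wit G d.adj = i := by
  simp [wits]

/-- the union of the closed edges of a walk. -/
def piSet {v u : X} (p : (Gr G).Walk v u) : Set X :=
  {x | ∃ i ∈ wits G p, x ∈ Set.range (G.edge i)}

lemma isClosed_piSet {v u : X} (p : (Gr G).Walk v u) : IsClosed (piSet G p) := by
  have heq : piSet G p = ⋃ i ∈ {i : Fin G.n | i ∈ wits G p}, Set.range (G.edge i) := by
    ext x; simp [piSet]
  rw [heq]
  exact Set.Finite.isClosed_biUnion (Set.toFinite _) (fun j _ => isClosed_range_edge G j)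

lemma ep_wit_cases' (d : (Gr G).Dart) (b : Bool) :
    ep G (wit G d.adj) b = d.toProd.1 ∨ ep G (wit G d.adj) b = d.toProd.2 := by
  rcases wit_spec G d.adj with ⟨h1, h2⟩ | ⟨h1, h2⟩ <;> cases b
  · exact Or.inl h1
  · exact Or.inr h2
  · exact Or.inr h1
  · exact Or.inl h2

lemma ep_wit_mem_support {v u : X} {p : (Gr G).Walk v u} {d : (Gr G).Dart}
    (hd : d ∈ p.darts) (b : Bool) : ep G (wit G d.adj) b ∈ p.support := by
  rcases ep_wit_cases' G d b with h | h <;> rw [h]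
  · exact Walk.dart_fst_mem_support_of_mem_darts p hd
  · exact Walk.dart_snd_mem_support_of_mem_darts p hd

lemma ep_inj_bool {i : Fin G.n} {b1 b2 : Bool} (h : ep G i b1 = ep G i b2) : b1 = b2 := by
  cases b1 <;> cases b2
  · rfl
  · exact absurd h (ep_ne G i)
  · exact absurd h.symm (ep_ne G i)
  · rfl

/-- crucial: a point of the open part of a chain on an edge not of the chain
gives a contradiction. -/
lemma chain_meet {v u : X} {p : (Gr G).Walk v u} (hp : p.IsPath)
    (hint : ∀ t ∈ p.support, t ≠ v → t ≠ u → ¬ G.IsBranchPoint t)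
    {x : X} {j : Fin G.n} (hxp : x ∈ piSet G p) (hxv : x ≠ v) (hxu : x ≠ u)
    (hj : j ∉ wits G p) (hxj : x ∈ Set.range (G.edge j)) : False := by
  obtain ⟨i, hiw, hxi⟩ := hxp
  have hij : i ≠ j := fun h => hj (h ▸ hiw)
  obtain ⟨bi, hbi⟩ : ∃ b, ep G i b = x := by
    rcases (G.meet i j hij x ⟨hxi, hxj⟩).1 with h' | h'
    · exact ⟨false, h'.symm⟩
    · exact ⟨true, h'.symm⟩
  obtain ⟨bj, hbj⟩ : ∃ b, ep G j b = x := by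
    rcases (G.meet i j hij x ⟨hxi, hxj⟩).2 with h' | h'
    · exact ⟨false, h'.symm⟩
    · exact ⟨true, h'.symm⟩
  -- x is an internal vertex of the walk
  obtain ⟨d, hd, hdw⟩ := (mem_wits G).mp hiw
  have hxsupp : x ∈ p.support := by
    rw [← hbi, ← hdw]
    exact ep_wit_mem_support G hd bi
  have hnb : ¬ G.IsBranchPoint x := hint x hxsupp hxv hxu
  apply hnb
  obtain ⟨d1, hd1, d2, hd2, hd1s, hd2f, hdne⟩ := internal_darts p hp x hxsupp hxv hxu
  obtain ⟨β1, hβ1⟩ := dart_inc G d1 (Or.inr hd1s.symm)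
  obtain ⟨β2, hβ2⟩ := dart_inc G d2 (Or.inl hd2f.symm)
  have he12 : wit G d1.adj ≠ wit G d2.adj := by
    intro heq
    rcases wit_eq_endpoints G d1.adj d2.adj heq with ⟨ha, _⟩ | ⟨ha, _⟩
    · exact d1.adj.ne (by rw [ha, hd2f, hd1s])
    · exact hdne ha
  have hj1 : j ≠ wit G d1.adj := by
    intro h; apply hj; rw [h, mem_wits]; exact ⟨d1, hd1, rfl⟩
  have hj2 : j ≠ wit G d2.adj := by
    intro h; apply hj; rw [h, mem_wits]; exact ⟨d2, hd2, rfl⟩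
  apply branch_of_card G
  apply three_le_card (a := (wit G d1.adj, β1)) (b := (wit G d2.adj, β2)) (c := (j, bj))
  · exact Finset.mem_filter.mpr ⟨Finset.mem_univ _, hβ1⟩
  · exact Finset.mem_filter.mpr ⟨Finset.mem_univ _, hβ2⟩
  · exact Finset.mem_filter.mpr ⟨Finset.mem_univ _, hbj⟩
  · exact fun h => he12 (congrArg Prod.fst h)
  · exact fun h => hj1 (congrArg Prod.fst h).symm
  · exact fun h => hj2 (congrArg Prod.fst h).symm

/-- the open part of a chain is open. -/
lemma chain_open {v u : X} {p : (Gr G).Walk v u} (hp : p.IsPath)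
    (hint : ∀ t ∈ p.support, t ≠ v → t ≠ u → ¬ G.IsBranchPoint t) :
    IsOpen (piSet G p \ {v, u}) := by
  have hcompl : (piSet G p \ {v, u})ᶜ =
      ({v, u} : Set X) ∪ ⋃ j ∈ {j : Fin G.n | j ∉ wits G p}, Set.range (G.edge j) := by
    ext x
    simp only [Set.mem_compl_iff, Set.mem_diff, Set.mem_union, Set.mem_iUnion,
      Set.mem_setOf_eq, not_and_or, not_not]
    constructor
    · rintro (hx | hx)
      · obtain ⟨j, hj⟩ := exists_edge G x
        by_cases hjw : j ∈ wits G p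
        · exact absurd ⟨j, hjw, hj⟩ hx
        · exact Or.inr ⟨j, hjw, hj⟩
      · exact Or.inl hx
    · rintro (hx | ⟨j, hjw, hj⟩)
      · exact Or.inr hx
      · by_cases hxvu : x ∈ ({v, u} : Set X)
        · exact Or.inr hxvu
        · left
          intro hxp
          exact chain_meet G hp hint hxp
            (fun h => hxvu (h ▸ Set.mem_insert _ _))
            (fun h => hxvu (h ▸ Set.mem_insert_of_mem _ rfl)) hjw hj
  rw [← isClosed_compl_iff, hcompl]
  apply IsClosed.union
  · exact (Set.finite_singleton _).insert _ |>.isClosed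
  · exact Set.Finite.isClosed_biUnion (Set.toFinite _) (fun j _ => isClosed_range_edge G j)

lemma chain_bd {v u : X} (p : (Gr G).Walk v u) :
    closure (piSet G p \ {v, u}) \ (piSet G p \ {v, u}) ⊆ {v, u} := by
  intro x hx
  have h1 : x ∈ piSet G p := by
    have := closure_mono (Set.diff_subset (t := ({v, u} : Set X))) hx.1
    rwa [(isClosed_piSet G p).closure_eq] at this
  by_contra hne
  exact hx.2 ⟨h1, hne⟩

/-- the first dart of a nonempty walk. -/
lemma firstDart {v u : X} (p : (Gr G).Walk v u) (h : v ≠ u) :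
    ∃ d ∈ p.darts, d.toProd.1 = v := by
  cases p with
  | nil => exact absurd rfl h
  | cons h' q =>
    refine ⟨⟨(_, _), h'⟩, ?_, rfl⟩
    rw [Walk.darts_cons]
    exact List.mem_cons_self

/-- midpoint of the first edge of the chain is in its open part. -/
lemma chain_mid_mem {v u : X} {p : (Gr G).Walk v u} (hvu : v ≠ u)
    (hu : G.IsBranchPoint u) {d : (Gr G).Dart} (hd : d ∈ p.darts) (hdv : d.toProd.1 = v) :
    mid G (wit G d.adj) ∈ piSet G p \ {v, u} := by
  set i := wit G d.adj with hi
  have hmr : mid G i ∈ Set.range (G.edge i) := ⟨_, rfl⟩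
  have hmint := mid_mem_eInt G i
  have hmne : ∀ y : X, (∃ b, ep G i b = y) → mid G i ≠ y := by
    rintro y ⟨b, rfl⟩ h
    apply hmint.2
    cases b
    · exact Or.inl h
    · exact Or.inr h
  constructor
  · exact ⟨i, (mem_wits G).mpr ⟨d, hd, rfl⟩, hmr⟩
  · intro hmem
    rcases hmem with h | h
    · exact hmne v (dart_inc G d (Or.inl hdv.symm)) h
    · have h' : mid G i = u := h
      by_cases hur : u ∈ Set.range (G.edge i)
      · obtain ⟨ii, bb, hib⟩ := branch_is_vertex G hu
        exact hmne u (vertex_mem_range G hib hur) h'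
      · exact hur (h' ▸ hmr)

/-- edges of two internally disjoint walks are distinct. -/
lemma wits_disjoint {v u w : X} {p1 : (Gr G).Walk v u} {p2 : (Gr G).Walk v w}
    (hcross : ∀ t, t ∈ p1.support → t ∈ p2.support → t = v)
    {i : Fin G.n} (h1 : i ∈ wits G p1) (h2 : i ∈ wits G p2) : False := by
  obtain ⟨d1, hd1, hw1⟩ := (mem_wits G).mp h1
  obtain ⟨d2, hd2, hw2⟩ := (mem_wits G).mp h2
  have heq : wit G d1.adj = wit G d2.adj := hw1.trans hw2.symm
  have hmem1 : d1.toProd.1 ∈ p1.support := Walk.dart_fst_mem_support_of_mem_darts _ hd1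
  have hmem1' : d1.toProd.2 ∈ p1.support := Walk.dart_snd_mem_support_of_mem_darts _ hd1
  have hmem2 : d2.toProd.1 ∈ p2.support := Walk.dart_fst_mem_support_of_mem_darts _ hd2
  have hmem2' : d2.toProd.2 ∈ p2.support := Walk.dart_snd_mem_support_of_mem_darts _ hd2
  rcases wit_eq_endpoints G d1.adj d2.adj heq with ⟨ha, hb⟩ | ⟨ha, hb⟩
  · have e1 : d1.toProd.1 = v := hcross _ hmem1 (ha ▸ hmem2)
    have e2 : d1.toProd.2 = v := hcross _ hmem1' (hb ▸ hmem2')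
    exact d1.adj.ne (e1.trans e2.symm)
  · have e1 : d1.toProd.1 = v := hcross _ hmem1 (ha ▸ hmem2')
    have e2 : d1.toProd.2 = v := hcross _ hmem1' (hb ▸ hmem2)
    exact d1.adj.ne (e1.trans e2.symm)

/-- at most one incidence at an endpoint of a path comes from its edges. -/
lemma wits_inc_card_le_one {a b : X} {p : (Gr G).Walk a b} (hp : p.IsPath)
    {y : X} (hy : y = a ∨ y = b) :
    ((inc G y).filter (fun q => q.1 ∈ wits G p)).card ≤ 1 := by
  classical
  rw [Finset.card_le_one]
  rintro ⟨i1, b1⟩ hq1 ⟨i2, b2⟩ hq2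
  obtain ⟨hm1, hw1⟩ := Finset.mem_filter.mp hq1
  obtain ⟨hm2, hw2⟩ := Finset.mem_filter.mp hq2
  have hep1 : ep G i1 b1 = y := by simpa [inc] using hm1
  have hep2 : ep G i2 b2 = y := by simpa [inc] using hm2
  obtain ⟨d1, hd1, hwd1⟩ := (mem_wits G).mp hw1
  obtain ⟨d2, hd2, hwd2⟩ := (mem_wits G).mp hw2
  have hwd1' : wit G d1.adj = i1 := hwd1
  have hwd2' : wit G d2.adj = i2 := hwd2
  have ht1 : y = d1.toProd.1 ∨ y = d1.toProd.2 := by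
    rcases ep_wit_cases' G d1 b1 with h | h <;> rw [hwd1'] at h
    · left; rw [← hep1]; exact h
    · right; rw [← hep1]; exact h
  have ht2 : y = d2.toProd.1 ∨ y = d2.toProd.2 := by
    rcases ep_wit_cases' G d2 b2 with h | h <;> rw [hwd2'] at h
    · left; rw [← hep2]; exact h
    · right; rw [← hep2]; exact h
  have hdd : d1 = d2 := endpoint_dart_unique p hp y hy d1 hd1 d2 hd2 ht1 ht2
  have hii : i1 = i2 := by rw [← hwd1', ← hwd2', hdd]
  subst hii
  have hbb : b1 = b2 := ep_inj_bool G (hep1.trans hep2.symm)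
  rw [hbb]

lemma wits_inc_zero {a b : X} {p : (Gr G).Walk a b} {y : X} (hy : y ∉ p.support) :
    ((inc G y).filter (fun q => q.1 ∈ wits G p)).card = 0 := by
  classical
  rw [Finset.card_eq_zero, Finset.eq_empty_iff_forall_notMem]
  rintro ⟨i, b⟩ hq
  obtain ⟨hm, hw⟩ := Finset.mem_filter.mp hq
  have hep : ep G i b = y := by simpa [inc] using hm
  obtain ⟨d, hd, hwd⟩ := (mem_wits G).mp hw
  apply hy
  have hwd' : wit G d.adj = i := hwd
  rw [← hep, ← hwd']
  exact ep_wit_mem_support G hd b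

end Chain


/-! ### final assembly -/

section Final

open SimpleGraph

variable {X : Type*} [TopologicalSpace X] [T2Space X] [ConnectedSpace X] (G : TopGraph X)

theorem not_seven_ac
    (h3 : ∃ x y z : X, x ≠ y ∧ x ≠ z ∧ y ≠ z ∧
      G.IsBranchPoint x ∧ G.IsBranchPoint y ∧ G.IsBranchPoint z) :
    ¬ NArcConnected X 7 := by
  classical
  intro hN
  obtain ⟨u, v, w, p1, p2, huv, huw, hvw, hu, hv, hw, hp1, hp2, hint1, hint2, hcross⟩ :=
    config G h3
  have hvu : v ≠ u := Ne.symm huv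
  obtain ⟨d1, hd1, hd1v⟩ := firstDart G p1 hvu
  obtain ⟨d2, hd2, hd2v⟩ := firstDart G p2 hvw
  have hunp2 : u ∉ p2.support := fun hmem =>
    huv (hcross u (Walk.end_mem_support p1) hmem)
  have hwnp1 : w ∉ p1.support := fun hmem =>
    hvw (hcross w hmem (Walk.end_mem_support p2)).symm
  -- good incidences
  set goodInc : X → Finset (Fin G.n × Bool) :=
    fun y => (inc G y).filter (fun q => q.1 ∉ wits G p1 ∧ q.1 ∉ wits G p2) with hgoodInc
  have hsplit : ∀ y : X, (inc G y).card ≤ (goodInc y).card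
      + ((inc G y).filter (fun q => q.1 ∈ wits G p1)).card
      + ((inc G y).filter (fun q => q.1 ∈ wits G p2)).card := by
    intro y
    have hsub : inc G y ⊆ (goodInc y ∪ (inc G y).filter (fun q => q.1 ∈ wits G p1))
        ∪ (inc G y).filter (fun q => q.1 ∈ wits G p2) := by
      intro q hq
      by_cases h1 : q.1 ∈ wits G p1
      · exact Finset.mem_union_left _
          (Finset.mem_union_right _ (Finset.mem_filter.mpr ⟨hq, h1⟩))
      · by_cases h2 : q.1 ∈ wits G p2
        · exact Finset.mem_union_right _ (Finset.mem_filter.mpr ⟨hq, h2⟩)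
        · exact Finset.mem_union_left _
            (Finset.mem_union_left _ (Finset.mem_filter.mpr ⟨hq, h1, h2⟩))
    calc (inc G y).card ≤ _ := Finset.card_le_card hsub
      _ ≤ ((goodInc y ∪ (inc G y).filter (fun q => q.1 ∈ wits G p1)).card
          + ((inc G y).filter (fun q => q.1 ∈ wits G p2)).card) := Finset.card_union_le _ _
      _ ≤ _ := by
          have := Finset.card_union_le (goodInc y)
            ((inc G y).filter (fun q => q.1 ∈ wits G p1))
          omega
  have hgu : 2 ≤ (goodInc u).card := by
    have h1 := wits_inc_card_le_one G hp1 (y := u) (Or.inr rfl)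
    have h2 : ((inc G u).filter (fun q => q.1 ∈ wits G p2)).card = 0 :=
      wits_inc_zero G hunp2
    have h3' := branch_card G hu
    have h4 := hsplit u
    omega
  have hgv : 1 ≤ (goodInc v).card := by
    have h1 := wits_inc_card_le_one G hp1 (y := v) (Or.inl rfl)
    have h2 := wits_inc_card_le_one G hp2 (y := v) (Or.inl rfl)
    have h3' := branch_card G hv
    have h4 := hsplit v
    omega
  have hgw : 2 ≤ (goodInc w).card := by
    have h1 := wits_inc_card_le_one G hp2 (y := w) (Or.inr rfl)
    have h2 : ((inc G w).filter (fun q => q.1 ∈ wits G p1)).card = 0 :=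
      wits_inc_zero G hwnp1
    have h3' := branch_card G hw
    have h4 := hsplit w
    omega
  obtain ⟨Su, hSuSub, hSu⟩ := Finset.exists_subset_card_eq hgu
  obtain ⟨Sv, hSvSub, hSv⟩ := Finset.exists_subset_card_eq hgv
  obtain ⟨Sw, hSwSub, hSw⟩ := Finset.exists_subset_card_eq hgw
  have hgoodP : ∀ (y : X), ∀ q ∈ goodInc y,
      ep G q.1 q.2 = y ∧ q.1 ∉ wits G p1 ∧ q.1 ∉ wits G p2 := by
    intro y q hq
    obtain ⟨hm, hgood⟩ := Finset.mem_filter.mp hq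
    exact ⟨by simpa [inc] using hm, hgood⟩
  set SLOTS := (Su ∪ Sv) ∪ Sw with hSLOTSdef
  have hSLOTSP : ∀ q ∈ SLOTS,
      (ep G q.1 q.2 = u ∨ ep G q.1 q.2 = v ∨ ep G q.1 q.2 = w)
      ∧ q.1 ∉ wits G p1 ∧ q.1 ∉ wits G p2 := by
    intro q hq
    rcases Finset.mem_union.mp hq with hq' | hq'
    · rcases Finset.mem_union.mp hq' with hq'' | hq''
      · obtain ⟨he, hg⟩ := hgoodP u q (hSuSub hq'')
        exact ⟨Or.inl he, hg⟩
      · obtain ⟨he, hg⟩ := hgoodP v q (hSvSub hq'')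
        exact ⟨Or.inr (Or.inl he), hg⟩
    · obtain ⟨he, hg⟩ := hgoodP w q (hSwSub hq')
      exact ⟨Or.inr (Or.inr he), hg⟩
  have hSLOTScard : SLOTS.card = 5 := by
    have hduv : Disjoint Su Sv := by
      rw [Finset.disjoint_left]
      intro q hqu hqv
      exact huv (((hgoodP u q (hSuSub hqu)).1).symm.trans ((hgoodP v q (hSvSub hqv)).1))
    have hduw : Disjoint Su Sw := by
      rw [Finset.disjoint_left]
      intro q hqu hqw
      exact huw (((hgoodP u q (hSuSub hqu)).1).symm.trans ((hgoodP w q (hSwSub hqw)).1))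
    have hdvw : Disjoint Sv Sw := by
      rw [Finset.disjoint_left]
      intro q hqv hqw
      exact hvw (((hgoodP v q (hSvSub hqv)).1).symm.trans ((hgoodP w q (hSwSub hqw)).1))
    rw [hSLOTSdef, Finset.card_union_of_disjoint (Finset.disjoint_union_left.mpr ⟨hduw, hdvw⟩),
      Finset.card_union_of_disjoint hduv, hSu, hSv, hSw]
  set GEdges := SLOTS.image Prod.fst with hGE
  have hGEcard : GEdges.card ≤ 5 := hSLOTScard ▸ Finset.card_image_le
  have hGEprop : ∀ g ∈ GEdges, g ∉ wits G p1 ∧ g ∉ wits G p2 := by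
    intro g hg
    obtain ⟨q, hq, hq1⟩ := Finset.mem_image.mp hg
    exact hq1 ▸ (hSLOTSP q hq).2
  -- the items
  set m1 : X := mid G (wit G d1.adj) with hm1def
  set m2 : X := mid G (wit G d2.adj) with hm2def
  have hm1 : m1 ∈ piSet G p1 \ {v, u} := chain_mid_mem G hvu hu hd1 hd1v
  have hm2 : m2 ∈ piSet G p2 \ {v, w} := chain_mid_mem G hvw hw hd2 hd2v
  set itc1 : Item X := ⟨piSet G p1 \ {v, u}, v, u, m1, chain_open G hp1 hint1, hm1,
    chain_bd G p1⟩ with hitc1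
  set itc2 : Item X := ⟨piSet G p2 \ {v, w}, v, w, m2, chain_open G hp2 hint2, hm2,
    chain_bd G p2⟩ with hitc2
  set itg : Fin G.n → Item X := fun g =>
    ⟨eInt G g, ep G g false, ep G g true, mid G g, isOpen_eInt G g, mid_mem_eInt G g,
      eInt_closure_diff G g⟩ with hitg
  set it : Bool ⊕ {g // g ∈ GEdges} → Item X :=
    Sum.elim (fun b => cond b itc2 itc1) (fun g => itg g.1) with hit
  -- disjointness facts
  have hO12 : (piSet G p1 \ {v, u}) ∩ (piSet G p2 \ {v, w}) = ∅ := by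
    ext x
    simp only [Set.mem_inter_iff, Set.mem_empty_iff_false, iff_false, not_and]
    rintro ⟨hx1, hxn1⟩ ⟨hx2, hxn2⟩
    obtain ⟨i', hi'w, hxi'⟩ := hx2
    have hi'n1 : i' ∉ wits G p1 := fun h => wits_disjoint G hcross h hi'w
    have hxv : x ≠ v := fun h => hxn1 (by rw [h]; exact Set.mem_insert _ _)
    have hxu : x ≠ u := fun h => hxn1 (by rw [h]; exact Set.mem_insert_of_mem _ rfl)
    exact chain_meet G hp1 hint1 hx1 hxv hxu hi'n1 hxi'
  have hOc1g : ∀ g : Fin G.n, g ∉ wits G p1 → (piSet G p1 \ {v, u}) ∩ eInt G g = ∅ := by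
    intro g hg
    ext x
    simp only [Set.mem_inter_iff, Set.mem_empty_iff_false, iff_false, not_and]
    rintro ⟨hx1, hxn1⟩ hx2
    have hxv : x ≠ v := fun h => hxn1 (by rw [h]; exact Set.mem_insert _ _)
    have hxu : x ≠ u := fun h => hxn1 (by rw [h]; exact Set.mem_insert_of_mem _ rfl)
    exact chain_meet G hp1 hint1 hx1 hxv hxu hg hx2.1
  have hOc2g : ∀ g : Fin G.n, g ∉ wits G p2 → (piSet G p2 \ {v, w}) ∩ eInt G g = ∅ := by
    intro g hg
    ext x
    simp only [Set.mem_inter_iff, Set.mem_empty_iff_false, iff_false, not_and]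
    rintro ⟨hx1, hxn1⟩ hx2
    have hxv : x ≠ v := fun h => hxn1 (by rw [h]; exact Set.mem_insert _ _)
    have hxw : x ≠ w := fun h => hxn1 (by rw [h]; exact Set.mem_insert_of_mem _ rfl)
    exact chain_meet G hp2 hint2 hx1 hxv hxw hg hx2.1
  have hdisj : ∀ k l, k ≠ l → (it k).O ∩ (it l).O = ∅ := by
    rintro (b | g) (b' | g') hne
    · cases b <;> cases b'
      · exact absurd rfl hne
      · show itc1.O ∩ itc2.O = ∅
        exact hO12
      · show itc2.O ∩ itc1.O = ∅
        rw [Set.inter_comm]; exact hO12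
      · exact absurd rfl hne
    · cases b
      · show itc1.O ∩ (itg g'.1).O = ∅
        exact hOc1g g'.1 (hGEprop g'.1 g'.2).1
      · show itc2.O ∩ (itg g'.1).O = ∅
        exact hOc2g g'.1 (hGEprop g'.1 g'.2).2
    · cases b'
      · show (itg g.1).O ∩ itc1.O = ∅
        rw [Set.inter_comm]
        exact hOc1g g.1 (hGEprop g.1 g.2).1
      · show (itg g.1).O ∩ itc2.O = ∅
        rw [Set.inter_comm]
        exact hOc2g g.1 (hGEprop g.1 g.2).2
    · have hgg : g.1 ≠ g'.1 := by
        intro h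
        exact hne (by rw [Subtype.ext h])
      show (itg g.1).O ∩ (itg g'.1).O = ∅
      exact eInt_disjoint G hgg
  -- the seven points
  set Lst : List X := m1 :: m2 :: (GEdges.toList.map (fun g => mid G g)) with hLstdef
  have hLlen : Lst.length ≤ 7 := by
    simp only [hLstdef, List.length_cons, List.length_map, Finset.length_toList]
    omega
  obtain ⟨A, hA, hpA⟩ := hN (fun i => Lst.getD i m1)
  have hmemA : ∀ x ∈ Lst, x ∈ A := by
    intro x hx
    obtain ⟨n, hget⟩ := List.mem_iff_get.mp hx
    have h7 : (n : ℕ) < 7 := lt_of_lt_of_le n.2 hLlen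
    have h := hpA ⟨(n : ℕ), h7⟩
    have hg : Lst.getD ((⟨(n : ℕ), h7⟩ : Fin 7) : ℕ) m1 = x := by
      rw [List.getD_eq_getElem Lst m1 (by exact n.2)]
      rw [← List.get_eq_getElem]
      exact hget
    rwa [hg] at h
  have hmA : ∀ k, (it k).m ∈ A := by
    rintro (b | g)
    · cases b
      · exact hmemA m1 (List.mem_cons_self)
      · exact hmemA m2 (List.mem_cons_of_mem _ (List.mem_cons_self))
    · apply hmemA
      show mid G g.1 ∈ Lst
      exact List.mem_cons_of_mem _ (List.mem_cons_of_mem _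
        (List.mem_map.mpr ⟨g.1, Finset.mem_toList.mpr g.2, rfl⟩))
  -- the counting
  set Y : Finset X := {u, v, w} with hY
  have hYcard : Y.card = 3 := by
    rw [hY, Finset.card_insert_of_notMem (by simp [huv, huw]),
      Finset.card_insert_of_notMem (by simp [hvw]), Finset.card_singleton]
  have hsc1 : (({v, u} : Finset X) ∩ Y).card = 2 := by
    have hsub : ({v, u} : Finset X) ⊆ Y := by
      intro x hx
      simp only [Finset.mem_insert, Finset.mem_singleton] at hx
      rcases hx with rfl | rfl <;> simp [hY]
    rw [Finset.inter_eq_left.mpr hsub,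
      Finset.card_insert_of_notMem (by simp [hvu]), Finset.card_singleton]
  have hsc2 : (({v, w} : Finset X) ∩ Y).card = 2 := by
    have hsub : ({v, w} : Finset X) ⊆ Y := by
      intro x hx
      simp only [Finset.mem_insert, Finset.mem_singleton] at hx
      rcases hx with rfl | rfl <;> simp [hY]
    rw [Finset.inter_eq_left.mpr hsub,
      Finset.card_insert_of_notMem (by simp [hvw]), Finset.card_singleton]
  have hslotsum : 5 ≤ ∑ g ∈ GEdges, (({ep G g false, ep G g true} : Finset X) ∩ Y).card := by
    have h1 := Finset.card_eq_sum_card_image (Prod.fst) SLOTS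
    rw [hSLOTScard] at h1
    calc (5 : ℕ) = ∑ g ∈ GEdges, (SLOTS.filter (fun q => q.1 = g)).card := h1
      _ ≤ _ := ?_
    apply Finset.sum_le_sum
    intro g hg
    apply Finset.card_le_card_of_injOn (fun q => ep G q.1 q.2)
    · intro q hq
      obtain ⟨hqS, hq1⟩ := Finset.mem_filter.mp hq
      obtain ⟨qi, qb⟩ := q
      have hq1' : qi = g := hq1
      subst hq1'
      rw [Finset.mem_coe, Finset.mem_inter]
      constructor
      · cases qb <;> simp
      · rcases (hSLOTSP _ hqS).1 with h | h | h <;> beta_reduce <;> rw [h] <;> simp [hY]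
    · rintro ⟨ia, ba⟩ hqa ⟨ib, bb⟩ hqb heq
      have ha' : ia = g := (Finset.mem_filter.mp hqa).2
      have hb' : ib = g := (Finset.mem_filter.mp hqb).2
      subst ha'
      have hb'' : ib = ia := hb'
      subst hb''
      have hba : ba = bb := ep_inj_bool G heq
      rw [Prod.mk.injEq]
      exact ⟨rfl, hba⟩
  have hsum_eq : (∑ k : Bool ⊕ {g // g ∈ GEdges},
        (({(it k).a, (it k).b} : Finset X) ∩ Y).card)
      = (({v, w} : Finset X) ∩ Y).card + (({v, u} : Finset X) ∩ Y).card
        + ∑ g ∈ GEdges, (({ep G g false, ep G g true} : Finset X) ∩ Y).card := by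
    rw [Fintype.sum_sum_type, Fintype.sum_bool]
    congr 1
    rw [← Finset.sum_coe_sort GEdges
      (fun g => (({ep G g false, ep G g true} : Finset X) ∩ Y).card)]
    rfl
  have hcount : 2 * Y.card + 2 < ∑ k : Bool ⊕ {g // g ∈ GEdges},
      (({(it k).a, (it k).b} : Finset X) ∩ Y).card := by
    rw [hYcard, hsum_eq, hsc1, hsc2]
    omega
  exact master hA it hdisj hmA Y hcount

end Final

end SevenAC

/-- No finite graph with three or more branch points is `7`-arc connected. -/
theorem three_branch_points_not_seven_ac {X : Type*} [TopologicalSpace X] [T2Space X]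
    [ConnectedSpace X] (G : TopGraph X)
    (h3 : ∃ x y z : X, x ≠ y ∧ x ≠ z ∧ y ≠ z ∧
      G.IsBranchPoint x ∧ G.IsBranchPoint y ∧ G.IsBranchPoint z) :
    ¬ NArcConnected X 7 := SevenAC.not_seven_ac G h3
end
end

section
/- No finite graph with exactly two branch points, each of degree at least 4, is 7-arc connected. -/
open Set Topology

open Classical
namespace SevenACaux

open Finset

variable {E V : Type*} [Fintype E] [DecidableEq E] (e0 e1 : E → V) (B : V → Prop)

/-- The ends of the edges in `C`. -/
noncomputable def endsF (C : Finset E) : Finset (E × Bool) := C ×ˢ Finset.univ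

/-- The vertex at an end. -/
def vtx (p : E × Bool) : V := if p.2 then e1 p.1 else e0 p.1

/-- Degree of `v` within `C`. -/
noncomputable def degC (C : Finset E) (v : V) : ℕ :=
  ((endsF C).filter (fun p => vtx e0 e1 p = v)).card

/-- An end is free if its vertex is a boundary vertex or it is the unique end there. -/
def isFree (C : Finset E) (p : E × Bool) : Prop :=
  B (vtx e0 e1 p) ∨ degC e0 e1 C (vtx e0 e1 p) = 1

noncomputable def freeC (C : Finset E) : ℕ :=
  ((endsF C).filter (isFree e0 e1 B C)).card

/-- Two edges are adjacent if they share a non-boundary vertex. -/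
def Adj (i j : E) : Prop :=
  ∃ b c : Bool, ¬ B (vtx e0 e1 (i, b)) ∧ vtx e0 e1 (i, b) = vtx e0 e1 (j, c)

def AdjIn (C : Finset E) (i j : E) : Prop := Adj e0 e1 B i j ∧ i ∈ C ∧ j ∈ C

def ConnIn (C : Finset E) : Prop :=
  ∀ a ∈ C, ∀ b ∈ C, Relation.ReflTransGen (AdjIn e0 e1 B C) a b

variable {e0 e1 B}

lemma mem_endsF {C : Finset E} {p : E × Bool} : p ∈ endsF C ↔ p.1 ∈ C := by
  simp [endsF, Finset.mem_product]

lemma adj_symm {i j : E} (h : Adj e0 e1 B i j) : Adj e0 e1 B j i := by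
  obtain ⟨b, c, h1, h2⟩ := h
  exact ⟨c, b, h2 ▸ h1, h2.symm⟩

lemma degC_mono {C C' : Finset E} (h : C' ⊆ C) (v : V) :
    degC e0 e1 C' v ≤ degC e0 e1 C v := by
  apply Finset.card_le_card
  apply Finset.filter_subset_filter
  intro p hp
  exact mem_endsF.mpr (h (mem_endsF.mp hp))

lemma rtg_ne {r : E → E → Prop} {a b : E} (h : Relation.ReflTransGen r a b) :
    Relation.ReflTransGen (fun u v => r u v ∧ u ≠ v) a b := by
  induction h with
  | refl => exact Relation.ReflTransGen.refl
  | @tail c d h1 h2 ih =>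
    by_cases hcd : c = d
    · exact hcd ▸ ih
    · exact ih.tail ⟨h2, hcd⟩

lemma splice {C : Finset E} {i j : E} (hj : j ∈ C.erase i)
    (huniq : ∀ c, Adj e0 e1 B c i → c ∈ C → c ≠ i → c = j) :
    ∀ a b, Relation.ReflTransGen (AdjIn e0 e1 B C) a b → a ≠ i →
      Relation.ReflTransGen (AdjIn e0 e1 B (C.erase i)) a (if b = i then j else b) := by
  intro a b h ha
  induction h with
  | refl => rw [if_neg ha]
  | @tail c d h1 h2 ih =>
    obtain ⟨hadj, hc, hd⟩ := h2
    by_cases hdi : d = i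
    · rw [if_pos hdi]
      by_cases hci : c = i
      · rw [if_pos hci] at ih; exact ih
      · rw [hdi] at hadj
        have hcj := huniq c hadj hc hci
        rw [if_neg hci, hcj] at ih; exact ih
    · rw [if_neg hdi]
      by_cases hci : c = i
      · have hadj' := adj_symm hadj
        rw [hci] at hadj'
        have hdj := huniq d hadj' hd hdi
        rw [if_pos hci] at ih
        rw [hdj]; exact ih
      · have ihc : Relation.ReflTransGen (AdjIn e0 e1 B (C.erase i)) a c := by
          rw [if_neg hci] at ih; exact ih
        exact ihc.tail ⟨hadj, Finset.mem_erase.mpr ⟨hci, hc⟩, Finset.mem_erase.mpr ⟨hdi, hd⟩⟩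

lemma bool_other (b c : Bool) : c = b ∨ c = !b := by cases b <;> cases c <;> simp

theorem freeC_le_two : ∀ (C : Finset E), (∀ v, ¬ B v → degC e0 e1 C v ≤ 2) →
    ConnIn e0 e1 B C → freeC e0 e1 B C ≤ 2 := by
  intro C
  induction C using Finset.strongInduction with
  | _ C IH =>
    intro hdeg hconn
    by_cases hcard : C.card ≤ 1
    · calc freeC e0 e1 B C ≤ (endsF C : Finset (E × Bool)).card := Finset.card_filter_le _ _
        _ = C.card * 2 := by simp [endsF]
        _ ≤ 2 := by omega
    push_neg at hcard
    by_cases hfree : freeC e0 e1 B C = 0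
    · omega
    -- pick a free end p = (i,b)
    obtain ⟨p, hp⟩ := Finset.card_ne_zero.mp hfree
    obtain ⟨hpE, hpF⟩ := Finset.mem_filter.mp hp
    obtain ⟨i, b⟩ := p
    have hiC : i ∈ C := mem_endsF.mp hpE
    set v := vtx e0 e1 (i, b) with hv
    set w := vtx e0 e1 (i, !b) with hw
    -- no other end at v unless B v
    have hext_v : ¬ B v → ∀ q ∈ endsF C, vtx e0 e1 q = v → q = (i, b) := by
      intro hBv q hq hqv
      have hd1 : degC e0 e1 C v = 1 := hpF.resolve_left hBv
      obtain ⟨r, hr⟩ := Finset.card_eq_one.mp hd1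
      have h1 : q ∈ (endsF C).filter (fun p => vtx e0 e1 p = v) :=
        Finset.mem_filter.mpr ⟨hq, hqv⟩
      have h2 : (i, b) ∈ (endsF C).filter (fun p => vtx e0 e1 p = v) :=
        Finset.mem_filter.mpr ⟨hpE, rfl⟩
      rw [hr, Finset.mem_singleton] at h1 h2
      rw [h1, h2]
    -- find an adjacent edge c ≠ i
    obtain ⟨a1, ha1, a2, ha2, ha12⟩ := Finset.one_lt_card.mp hcard
    have hj0 : ∃ j0 ∈ C, j0 ≠ i := by
      by_cases h : a1 = i
      · exact ⟨a2, ha2, fun hh => ha12 (h ▸ hh ▸ rfl)⟩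
      · exact ⟨a1, ha1, h⟩
    obtain ⟨j0, hj0C, hj0i⟩ := hj0
    have hchain := rtg_ne (hconn j0 hj0C i hiC)
    obtain ⟨c, -, hadjci, hci⟩ :
        ∃ c, Relation.ReflTransGen _ j0 c ∧ AdjIn e0 e1 B C c i ∧ c ≠ i := by
      rcases Relation.ReflTransGen.cases_tail hchain with h | ⟨c, h1, h2⟩
      · exact absurd h.symm hj0i
      · exact ⟨c, h1, h2.1, h2.2⟩
    obtain ⟨hadj, hcC, -⟩ := hadjci
    obtain ⟨bc, bi, hBz, hz⟩ := hadj
    -- the shared vertex is w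
    have hkey : vtx e0 e1 (c, bc) = w ∧ ¬ B w := by
      rcases bool_other b bi with hbi | hbi
      · exfalso
        subst hbi
        have hBv : ¬ B v := by rw [hv, ← hz]; exact hBz
        have := hext_v hBv (c, bc) (mem_endsF.mpr hcC) hz
        exact hci (congrArg Prod.fst this)
      · subst hbi
        have hBw' : ¬ B w := by rw [hw, ← hz]; exact hBz
        exact ⟨hz, hBw'⟩
    obtain ⟨hcw, hBw⟩ := hkey
    have hvw : v ≠ w := by
      intro hvweq
      have := hext_v (hvweq ▸ hBw) (c, bc) (mem_endsF.mpr hcC) (hcw.trans hvweq.symm)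
      exact hci (congrArg Prod.fst this)
    -- degree of w is exactly 2, with ends (i,!b) and (c,bc)
    set F := (endsF C).filter (fun p => vtx e0 e1 p = w) with hF
    have hqF : (i, !b) ∈ F := Finset.mem_filter.mpr ⟨mem_endsF.mpr hiC, rfl⟩
    have hcF : (c, bc) ∈ F := Finset.mem_filter.mpr ⟨mem_endsF.mpr hcC, hcw⟩
    have hne2 : ((i, !b) : E × Bool) ≠ (c, bc) := by
      intro h; exact hci (congrArg Prod.fst h).symm
    have hdegw : degC e0 e1 C w = 2 := by
      have h2 : 1 < F.card := Finset.one_lt_card.mpr ⟨_, hqF, _, hcF, hne2⟩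
      have hle : F.card ≤ 2 := hdeg w hBw
      show F.card = 2
      omega
    have hFeq : F = {(i, !b), (c, bc)} := by
      symm
      apply Finset.eq_of_subset_of_card_le
      · intro q hq
        rcases Finset.mem_insert.mp hq with h | h
        · exact h ▸ hqF
        · exact (Finset.mem_singleton.mp h) ▸ hcF
      · have : F.card = 2 := hdegw
        rw [this, Finset.card_insert_of_notMem (by simpa using hne2),
          Finset.card_singleton]
    have hmemF : ∀ q ∈ F, q = (i, !b) ∨ q = (c, bc) := by
      intro q hq; rw [hFeq] at hq; simpa using hq
    -- C' := C.erase i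
    set C' := C.erase i with hC'
    have hcC' : c ∈ C' := Finset.mem_erase.mpr ⟨hci, hcC⟩
    have huniq : ∀ c', Adj e0 e1 B c' i → c' ∈ C → c' ≠ i → c' = c := by
      intro c' hadj' hc'C hc'i
      obtain ⟨b', bi', hB', hz'⟩ := hadj'
      rcases bool_other b bi' with hbi | hbi
      · exfalso
        subst hbi
        have hBv : ¬ B v := by rw [hv, ← hz']; exact hB'
        have := hext_v hBv (c', b') (mem_endsF.mpr hc'C) hz'
        exact hc'i (congrArg Prod.fst this)
      · subst hbi
        have hmem : (c', b') ∈ F := Finset.mem_filter.mpr ⟨mem_endsF.mpr hc'C, hz'⟩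
        rcases hmemF _ hmem with h | h
        · exact absurd (congrArg Prod.fst h) hc'i
        · exact congrArg Prod.fst h
    have hconn' : ConnIn e0 e1 B C' := by
      intro a haC' b' hbC'
      have hab := hconn a (Finset.mem_erase.mp haC').2 b' (Finset.mem_erase.mp hbC').2
      have := splice hcC' huniq a b' hab (Finset.mem_erase.mp haC').1
      rwa [if_neg (Finset.mem_erase.mp hbC').1] at this
    have hdeg' : ∀ v', ¬ B v' → degC e0 e1 C' v' ≤ 2 := by
      intro v' hv'
      exact le_trans (degC_mono (Finset.erase_subset _ _) v') (hdeg v' hv')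
    -- degree of w in C' is 1
    have hdegw' : degC e0 e1 C' w = 1 := by
      have : (endsF C').filter (fun p => vtx e0 e1 p = w) = {(c, bc)} := by
        apply Finset.eq_of_subset_of_card_le
        · intro q hq
          obtain ⟨hq1, hq2⟩ := Finset.mem_filter.mp hq
          have hq1' : q.1 ∈ C' := mem_endsF.mp hq1
          have hq1i : q.1 ≠ i := (Finset.mem_erase.mp hq1').1
          have : q ∈ F := Finset.mem_filter.mpr
            ⟨mem_endsF.mpr (Finset.mem_erase.mp hq1').2, hq2⟩
          rcases hmemF _ this with h | h
          · exact absurd (congrArg Prod.fst h) hq1i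
          · simp [h]
        · simp only [Finset.card_singleton]
          exact Finset.card_pos.mpr
            ⟨(c, bc), Finset.mem_filter.mpr ⟨mem_endsF.mpr hcC', hcw⟩⟩
      unfold degC
      rw [this, Finset.card_singleton]
    -- the injection argument
    have hinj : freeC e0 e1 B C ≤ freeC e0 e1 B C' := by
      apply Finset.card_le_card_of_injOn (fun r => if r = (i, b) then (c, bc) else r)
      · intro r hr
        obtain ⟨hr1, hr2⟩ := Finset.mem_filter.mp hr
        by_cases hrib : r = (i, b)
        · simp only [if_pos hrib]
          refine Finset.mem_filter.mpr ⟨mem_endsF.mpr hcC', Or.inr ?_⟩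
          rw [hcw]; exact hdegw'
        · simp only [if_neg hrib]
          have hrfst : r.1 ≠ i := by
            intro hfst
            have hrr : r = (i, r.2) := Prod.ext hfst rfl
            rcases bool_other b r.2 with h | h
            · exact hrib (by rw [hrr, h])
            · have hrw : r = (i, !b) := by rw [hrr, h]
              rw [hrw] at hr2
              rcases hr2 with h' | h'
              · exact hBw h'
              · have : degC e0 e1 C w = 1 := h'
                omega
          refine Finset.mem_filter.mpr ⟨mem_endsF.mpr (Finset.mem_erase.mpr
            ⟨hrfst, mem_endsF.mp hr1⟩), ?_⟩
          set z := vtx e0 e1 r with hzdef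
          by_cases hBz0 : B z
          · exact Or.inl hBz0
          · have hdz : degC e0 e1 C z = 1 := hr2.resolve_left hBz0
            -- z has degree 1 in C; show z ∉ {v, w} hence degree unchanged
            right
            have hzw : z ≠ w := by
              intro hzweq
              rw [hzweq, hdegw] at hdz
              exact absurd hdz (by norm_num)
            have hzv : z ≠ v := by
              intro hzv
              have hBv : ¬ B v := by rw [← hzv]; exact hBz0
              have := hext_v hBv r hr1 (by rw [← hzdef]; exact hzv)
              exact hrib this
            have hfilt : (endsF C').filter (fun p => vtx e0 e1 p = z)
                = (endsF C).filter (fun p => vtx e0 e1 p = z) := by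
              apply Finset.Subset.antisymm
              · exact Finset.filter_subset_filter _ (fun q hq =>
                  mem_endsF.mpr (Finset.mem_erase.mp (mem_endsF.mp hq)).2)
              · intro q hq
                obtain ⟨hq1, hq2⟩ := Finset.mem_filter.mp hq
                have hq1i : q.1 ≠ i := by
                  intro hfst
                  have hqq : q = (i, q.2) := Prod.ext hfst rfl
                  rcases bool_other b q.2 with h | h
                  · rw [hqq, h] at hq2; exact hzv hq2.symm
                  · rw [hqq, h] at hq2; exact hzw hq2.symm
                exact Finset.mem_filter.mpr
                  ⟨mem_endsF.mpr (Finset.mem_erase.mpr ⟨hq1i, mem_endsF.mp hq1⟩), hq2⟩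
            unfold degC
            rw [hfilt]
            exact hdz
      · -- injectivity
        intro r1 hr1 r2 hr2 hf0
        have hf : (if r1 = (i,b) then (c,bc) else r1) = (if r2 = (i,b) then (c,bc) else r2) := hf0
        simp only [Finset.coe_filter, Set.mem_setOf_eq] at hr1 hr2
        have hcbc_notfree : ¬ isFree e0 e1 B C (c, bc) := by
          intro hh
          rcases hh with h | h
          · exact hBw (hcw ▸ h)
          · rw [hcw, hdegw] at h; omega
        by_cases h1 : r1 = (i, b) <;> by_cases h2 : r2 = (i, b)
        · rw [h1, h2]
        · exfalso
          rw [if_pos h1, if_neg h2] at hf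
          exact hcbc_notfree (hf ▸ hr2.2)
        · exfalso
          rw [if_neg h1, if_pos h2] at hf
          exact hcbc_notfree (hf ▸ hr1.2)
        · rwa [if_neg h1, if_neg h2] at hf
    have hss : C' ⊂ C := Finset.erase_ssubset hiC
    exact le_trans hinj (IH C' hss hdeg' hconn')


lemma rtg_symm {a b : E} (h : Relation.ReflTransGen (Adj e0 e1 B) a b) :
    Relation.ReflTransGen (Adj e0 e1 B) b a := by
  induction h with
  | refl => exact Relation.ReflTransGen.refl
  | tail _ h2 ih => exact Relation.ReflTransGen.head (adj_symm h2) ih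

lemma conn_class (a : E) :
    ConnIn e0 e1 B (Finset.univ.filter (fun i => Relation.ReflTransGen (Adj e0 e1 B) a i)) := by
  set Q := Finset.univ.filter (fun i => Relation.ReflTransGen (Adj e0 e1 B) a i) with hQ
  have hmemQ : ∀ i, i ∈ Q ↔ Relation.ReflTransGen (Adj e0 e1 B) a i := by
    intro i; simp [hQ]
  have lift : ∀ i j, Relation.ReflTransGen (Adj e0 e1 B) i j →
      Relation.ReflTransGen (Adj e0 e1 B) a i →
      Relation.ReflTransGen (AdjIn e0 e1 B Q) i j := by
    intro i j hij hai
    induction hij with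
    | refl => exact Relation.ReflTransGen.refl
    | @tail c d h1 h2 ih =>
      exact (ih).tail ⟨h2, (hmemQ c).mpr (hai.trans h1), (hmemQ d).mpr ((hai.trans h1).tail h2)⟩
  intro i hi j hj
  exact lift i j ((rtg_symm ((hmemQ i).mp hi)).trans ((hmemQ j).mp hj)) ((hmemQ i).mp hi)

lemma class_bEnds_le (hdeg : ∀ v, ¬ B v → degC e0 e1 Finset.univ v ≤ 2) (a : E) :
    ∑ i ∈ Finset.univ.filter (fun i => Relation.ReflTransGen (Adj e0 e1 B) a i),
      ((if B (e0 i) then 1 else 0) + (if B (e1 i) then 1 else 0)) ≤ 2 := by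
  set Q := Finset.univ.filter (fun i => Relation.ReflTransGen (Adj e0 e1 B) a i) with hQ
  have step1 : ∑ i ∈ Q, ((if B (e0 i) then 1 else 0) + (if B (e1 i) then 1 else 0))
      = ((endsF Q).filter (fun p => B (vtx e0 e1 p))).card := by
    rw [Finset.card_filter]
    unfold endsF
    rw [Finset.sum_product]
    refine Finset.sum_congr rfl fun i _ => ?_
    rw [Fintype.sum_bool]
    simp [vtx, add_comm]
  have step2 : ((endsF Q).filter (fun p => B (vtx e0 e1 p))).card ≤ freeC e0 e1 B Q := by
    apply Finset.card_le_card
    apply Finset.monotone_filter_right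
    intro p hp
    exact fun h => Or.inl h
  have step3 : freeC e0 e1 B Q ≤ 2 := by
    apply freeC_le_two
    · intro v hv
      exact le_trans (degC_mono (Finset.subset_univ Q) v) (hdeg v hv)
    · exact conn_class a
  omega

lemma exists_four_classes (hdeg : ∀ v, ¬ B v → degC e0 e1 Finset.univ v ≤ 2)
    (hbig : 8 ≤ ∑ i : E, ((if B (e0 i) then 1 else 0) + (if B (e1 i) then 1 else 0))) :
    ∃ a b c d : E,
      ¬ Relation.ReflTransGen (Adj e0 e1 B) a b ∧
      ¬ Relation.ReflTransGen (Adj e0 e1 B) a c ∧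
      ¬ Relation.ReflTransGen (Adj e0 e1 B) a d ∧
      ¬ Relation.ReflTransGen (Adj e0 e1 B) b c ∧
      ¬ Relation.ReflTransGen (Adj e0 e1 B) b d ∧
      ¬ Relation.ReflTransGen (Adj e0 e1 B) c d := by
  set R := Relation.ReflTransGen (Adj e0 e1 B) with hR
  set bE : E → ℕ := fun i => ((if B (e0 i) then 1 else 0) + (if B (e1 i) then 1 else 0)) with hbE
  have classBound : ∀ (a : E) (T : Finset E), (∀ i ∈ T, R a i) → ∑ i ∈ T, bE i ≤ 2 := by
    intro a T hT
    calc ∑ i ∈ T, bE i ≤ ∑ i ∈ Finset.univ.filter (fun i => R a i), bE i := by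
          apply Finset.sum_le_sum_of_subset
          intro i hi
          exact Finset.mem_filter.mpr ⟨Finset.mem_univ i, hT i hi⟩
      _ ≤ 2 := class_bEnds_le hdeg a
  have huniv : 8 ≤ ∑ i : E, bE i := hbig
  rcases isEmpty_or_nonempty E with hE | hE
  · rw [Finset.univ_eq_empty, Finset.sum_empty] at huniv
    omega
  obtain ⟨a0⟩ := hE
  by_cases hca : ∀ i : E, R a0 i
  · exfalso
    have := classBound a0 Finset.univ (fun i _ => hca i)
    omega
  push_neg at hca
  obtain ⟨b0, hab⟩ := hca
  by_cases hcb : ∀ i : E, ¬ R a0 i → R b0 i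
  · exfalso
    have hsplit := Finset.sum_filter_add_sum_filter_not Finset.univ (fun i => R a0 i) bE
    have h1 := classBound a0 (Finset.univ.filter (fun i => R a0 i))
      (fun i hi => (Finset.mem_filter.mp hi).2)
    have h2 := classBound b0 (Finset.univ.filter (fun i => ¬ R a0 i))
      (fun i hi => hcb i (Finset.mem_filter.mp hi).2)
    omega
  push_neg at hcb
  obtain ⟨c0, hac, hbc⟩ := hcb
  by_cases hcc : ∀ i : E, ¬ R a0 i → ¬ R b0 i → R c0 i
  · exfalso
    have hsplit := Finset.sum_filter_add_sum_filter_not Finset.univ (fun i => R a0 i) bE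
    have hsplit2 := Finset.sum_filter_add_sum_filter_not
      (Finset.univ.filter (fun i => ¬ R a0 i)) (fun i => R b0 i) bE
    have h1 := classBound a0 (Finset.univ.filter (fun i => R a0 i))
      (fun i hi => (Finset.mem_filter.mp hi).2)
    have h2 := classBound b0 ((Finset.univ.filter (fun i => ¬ R a0 i)).filter (fun i => R b0 i))
      (fun i hi => (Finset.mem_filter.mp hi).2)
    have h3 := classBound c0
      ((Finset.univ.filter (fun i => ¬ R a0 i)).filter (fun i => ¬ R b0 i))
      (fun i hi => hcc i (Finset.mem_filter.mp (Finset.mem_filter.mp hi).1).2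
        (Finset.mem_filter.mp hi).2)
    omega
  push_neg at hcc
  obtain ⟨d0, had, hbd, hcd⟩ := hcc
  exact ⟨a0, b0, c0, d0, hab, hac, had, hbc, hbd, hcd⟩

end SevenACaux

lemma pigeon_regions (α β : ℝ) (u : Fin 4 → ℝ) (hne : ∀ k, u k ≠ α ∧ u k ≠ β) :
    ∃ k l, k ≠ l ∧ u k ≤ u l ∧ ∀ t, u k ≤ t → t ≤ u l → t ≠ α ∧ t ≠ β := by
  classical
  set f : Fin 4 → Fin 3 := fun k =>
    if u k < min α β then 0 else if u k < max α β then 1 else 2 with hf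
  have regs : ∀ k : Fin 4, (u k < min α β ∧ f k = 0) ∨
      (min α β < u k ∧ u k < max α β ∧ f k = 1) ∨ (max α β < u k ∧ f k = 2) := by
    intro k
    by_cases h1 : u k < min α β
    · exact Or.inl ⟨h1, by simp only [hf]; rw [if_pos h1]⟩
    · have hmin_ne : u k ≠ min α β := by
        rcases min_choice α β with h | h <;> rw [h]
        · exact (hne k).1
        · exact (hne k).2
      have h1' : min α β < u k := lt_of_le_of_ne (not_lt.mp h1) hmin_ne.symm
      by_cases h2 : u k < max α β
      · exact Or.inr (Or.inl ⟨h1', h2, by simp only [hf]; rw [if_neg h1, if_pos h2]⟩)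
      · have hmax_ne : u k ≠ max α β := by
          rcases max_choice α β with h | h <;> rw [h]
          · exact (hne k).1
          · exact (hne k).2
        have h2' : max α β < u k := lt_of_le_of_ne (not_lt.mp h2) hmax_ne.symm
        exact Or.inr (Or.inr ⟨h2', by simp only [hf]; rw [if_neg h1, if_neg h2]⟩)
  have hαβ : min α β = α ∧ max α β = β ∨ min α β = β ∧ max α β = α := by
    rcases le_total α β with h | h
    · exact Or.inl ⟨min_eq_left h, max_eq_right h⟩
    · exact Or.inr ⟨min_eq_right h, max_eq_left h⟩
  have key : ∀ k l : Fin 4, f k = f l → u k ≤ u l →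
      ∀ t, u k ≤ t → t ≤ u l → t ≠ α ∧ t ≠ β := by
    intro k l hfkl hkl t ht1 ht2
    rcases regs k with ⟨hk1, hfk⟩ | ⟨hk1, hk2, hfk⟩ | ⟨hk1, hfk⟩ <;>
      rcases regs l with ⟨hl1, hfl⟩ | ⟨hl1, hl2, hfl⟩ | ⟨hl1, hfl⟩ <;>
      rw [hfk, hfl] at hfkl <;>
      first
        | exact absurd hfkl (by decide)
        | (rcases hαβ with ⟨ha, hb⟩ | ⟨ha, hb⟩ <;> constructor <;> intro hc <;>
            linarith [min_le_left α β, min_le_right α β, le_max_left α β, le_max_right α β])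
  obtain ⟨k, l, hkl, hfeq⟩ := Fintype.exists_ne_map_eq_of_card_lt f (by simp)
  rcases le_total (u k) (u l) with h | h
  · exact ⟨k, l, hkl, h, key k l hfeq h⟩
  · exact ⟨l, k, hkl.symm, h, key l k hfeq.symm h⟩


/-- No finite graph with exactly two branch points, each of degree at least `4`,
is `7`-arc connected. -/
theorem two_branch_points_degree_four_not_seven_ac {X : Type*} [TopologicalSpace X]
    [T2Space X] [ConnectedSpace X] (G : TopGraph X) (x y : X) (hxy : x ≠ y)
    (hset : {z : X | G.IsBranchPoint z} = {x, y})
    (hdx : 4 ≤ G.degree x) (hdy : 4 ≤ G.degree y) :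
    ¬ NArcConnected X 7 := by
  intro hNAC
  set e0 : Fin G.n → X := fun i => G.edge i i0 with he0
  set e1 : Fin G.n → X := fun i => G.edge i i1 with he1
  set B : X → Prop := fun v => v = x ∨ v = y with hB
  set R : Fin G.n → Fin G.n → Prop :=
    Relation.ReflTransGen (SevenACaux.Adj e0 e1 B) with hRdef
  -- covering
  have hcov : ∀ z : X, ∃ i, z ∈ Set.range (G.edge i) := by
    intro z
    have hz : z ∈ ⋃ i, Set.range (G.edge i) := by rw [G.cover]; trivial
    exact Set.mem_iUnion.mp hz
  -- degree bound off the branch points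
  have hdeg2 : ∀ v : X, ¬ B v → G.degree v ≤ 2 := by
    intro v hv
    have hvm : v ∉ ({x, y} : Set X) := by
      intro hmem
      rcases hmem with h | h
      · exact hv (Or.inl h)
      · exact hv (Or.inr h)
    rw [← hset] at hvm
    simp only [Set.mem_setOf_eq, TopGraph.IsBranchPoint, not_le] at hvm
    omega
  have hdegC : ∀ v : X, SevenACaux.degC e0 e1 Finset.univ v = G.degree v := by
    intro v
    unfold SevenACaux.degC SevenACaux.endsF TopGraph.degree
    rw [Finset.card_filter, Finset.sum_product]
    refine Finset.sum_congr rfl fun i _ => ?_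
    rw [Fintype.sum_bool]
    have h1 : SevenACaux.vtx e0 e1 (i, true) = G.edge i i1 := rfl
    have h0 : SevenACaux.vtx e0 e1 (i, false) = G.edge i i0 := rfl
    rw [h1, h0, add_comm]
  have hdegC2 : ∀ v : X, ¬ B v → SevenACaux.degC e0 e1 Finset.univ v ≤ 2 := by
    intro v hv; rw [hdegC]; exact hdeg2 v hv
  -- total boundary incidence count is at least 8
  have hsplitv : ∀ v : X, (if B v then (1:ℕ) else 0)
      = (if v = x then 1 else 0) + (if v = y then 1 else 0) := by
    intro v
    by_cases h1 : v = x <;> by_cases h2 : v = y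
    · exact absurd (h1.symm.trans h2) hxy
    · simp [hB, h1, h2, hxy, Ne.symm hxy]
    · simp [hB, h1, h2, hxy, Ne.symm hxy]
    · simp [hB, h1, h2, hxy, Ne.symm hxy]
  have hbig : 8 ≤ ∑ i : Fin G.n,
      ((if B (e0 i) then (1:ℕ) else 0) + (if B (e1 i) then 1 else 0)) := by
    have heq : ∑ i : Fin G.n, ((if B (e0 i) then (1:ℕ) else 0) + (if B (e1 i) then 1 else 0))
        = G.degree x + G.degree y := by
      unfold TopGraph.degree
      rw [← Finset.sum_add_distrib]
      refine Finset.sum_congr rfl fun i _ => ?_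
      rw [hsplitv, hsplitv]
      show _ = (if e0 i = x then 1 else 0) + (if e1 i = x then 1 else 0)
        + ((if e0 i = y then 1 else 0) + (if e1 i = y then 1 else 0))
      ring
    omega
  -- four pairwise non-connected edges
  obtain ⟨a0, b0, c0, d0, hab, hac, had, hbc, hbd, hcd⟩ :=
    SevenACaux.exists_four_classes (e0 := e0) (e1 := e1) (B := B) hdegC2
      (by convert hbig using 2 <;> congr!)
  have hRsymm : ∀ u v : Fin G.n, R u v → R v u := fun u v h => SevenACaux.rtg_symm h
  set idx : Fin 4 → Fin G.n := ![a0, b0, c0, d0] with hidx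
  have hpair : ∀ k l : Fin 4, k ≠ l → ¬ R (idx k) (idx l) := by
    intro k l hkl
    fin_cases k <;> fin_cases l <;>
      simp only [hidx, Matrix.cons_val_zero, Matrix.cons_val_one, Matrix.head_cons,
        Matrix.cons_val_two, Matrix.tail_cons, Matrix.cons_val_three] <;>
      first
        | exact absurd rfl hkl
        | exact hab | exact hac | exact had | exact hbc | exact hbd | exact hcd
        | exact fun h => hab (hRsymm _ _ h)
        | exact fun h => hac (hRsymm _ _ h)
        | exact fun h => had (hRsymm _ _ h)
        | exact fun h => hbc (hRsymm _ _ h)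
        | exact fun h => hbd (hRsymm _ _ h)
        | exact fun h => hcd (hRsymm _ _ h)
  -- midpoints of the four edges
  set half : Set.Icc (0:ℝ) 1 := ⟨1/2, by norm_num⟩ with hhalf
  have hmid_ne : ∀ (i : Fin G.n) (v : X), 4 ≤ G.degree v → G.edge i half ≠ v := by
    intro i v hv4 heq
    have hexj : ∃ j, j ≠ i ∧ (G.edge j i0 = v ∨ G.edge j i1 = v) := by
      by_contra hcon
      push_neg at hcon
      have hdv : G.degree v ≤ 2 := by
        unfold TopGraph.degree
        rw [Finset.sum_eq_single i]
        · split_ifs <;> norm_num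
        · intro j _ hj
          obtain ⟨hj1, hj2⟩ := hcon j hj
          simp [hj1, hj2]
        · intro h; exact absurd (Finset.mem_univ i) h
      omega
    obtain ⟨j, hji, hjv⟩ := hexj
    have hvr : v ∈ Set.range (G.edge j) := by
      rcases hjv with h | h
      · exact ⟨i0, h⟩
      · exact ⟨i1, h⟩
    have hvi : v ∈ Set.range (G.edge i) := ⟨half, heq⟩
    have hm2 := (G.meet j i hji v ⟨hvr, hvi⟩).2
    rcases hm2 with h | h
    · have hinj : half = i0 := (G.emb i).injective (heq.trans h)
      have := congrArg Subtype.val hinj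
      simp only [hhalf, i0] at this
      norm_num at this
    · have hinj : half = i1 := (G.emb i).injective (heq.trans h)
      have := congrArg Subtype.val hinj
      simp only [hhalf, i1] at this
      norm_num at this
  set m : Fin 4 → X := fun k => G.edge (idx k) half with hm
  have hmB : ∀ k, ¬ B (m k) := by
    intro k hBk
    rcases hBk with h | h
    · exact hmid_ne (idx k) x hdx h
    · exact hmid_ne (idx k) y hdy h
  -- get an arc through the seven points
  obtain ⟨A, hA, hmem⟩ := hNAC ![x, y, m 0, m 1, m 2, m 3, x]
  obtain ⟨e⟩ := hA
  have hxA : x ∈ A := by simpa using hmem 0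
  have hyA : y ∈ A := by simpa using hmem 1
  have hmA : ∀ k : Fin 4, m k ∈ A := by
    intro k
    fin_cases k
    · simpa using hmem 2
    · simpa using hmem 3
    · simpa using hmem 4
    · simpa using hmem 5
  set pt : (k : Fin 4) → A := fun k => ⟨m k, hmA k⟩ with hpt
  set u : Fin 4 → ℝ := fun k => ((e (pt k) : Set.Icc (0:ℝ) 1) : ℝ) with hu
  set av : Set.Icc (0:ℝ) 1 := e ⟨x, hxA⟩ with hav
  set bv : Set.Icc (0:ℝ) 1 := e ⟨y, hyA⟩ with hbv
  have hune : ∀ k, u k ≠ (av : ℝ) ∧ u k ≠ (bv : ℝ) := by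
    intro k
    constructor <;> intro h
    · have h1 : e (pt k) = av := Subtype.coe_injective h
      have h2 : pt k = ⟨x, hxA⟩ := e.injective (h1.trans rfl)
      have h3 : m k = x := congrArg Subtype.val h2
      exact hmB k (Or.inl h3)
    · have h1 : e (pt k) = bv := Subtype.coe_injective h
      have h2 : pt k = ⟨y, hyA⟩ := e.injective (h1.trans rfl)
      have h3 : m k = y := congrArg Subtype.val h2
      exact hmB k (Or.inr h3)
  obtain ⟨k, l, hkl, hord, hreg⟩ := pigeon_regions (av : ℝ) (bv : ℝ) u hune
  -- the connected subset of X avoiding x and y and containing m k and m l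
  set J : Set (Set.Icc (0:ℝ) 1) := Subtype.val ⁻¹' Set.Icc (u k) (u l) with hJdef
  have hIccsub : Set.Icc (u k) (u l) ⊆ Set.Icc (0:ℝ) 1 := by
    intro t ht
    exact ⟨le_trans (e (pt k)).2.1 ht.1, le_trans ht.2 (e (pt l)).2.2⟩
  have himg : Subtype.val '' J = Set.Icc (u k) (u l) := by
    rw [hJdef, Subtype.image_preimage_coe]
    exact Set.inter_eq_self_of_subset_right hIccsub
  have hJconn : IsPreconnected J := by
    have hind : Topology.IsInducing (Subtype.val : Set.Icc (0:ℝ) 1 → ℝ) :=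
      Topology.IsInducing.subtypeVal
    rw [← hind.isPreconnected_image, himg]
    exact isPreconnected_Icc
  set φ : Set.Icc (0:ℝ) 1 → X := fun t => ((e.symm t : A) : X) with hφdef
  have hφcont : Continuous φ := continuous_subtype_val.comp e.symm.continuous
  set S : Set X := φ '' J with hSdef
  have hSconn : IsPreconnected S := hJconn.image φ hφcont.continuousOn
  have hφe : ∀ q : A, φ (e q) = (q : X) := by
    intro q
    simp only [hφdef, Homeomorph.symm_apply_apply]
  have hmkS : m k ∈ S := by
    refine ⟨e (pt k), ?_, hφe (pt k)⟩
    exact ⟨le_rfl, hord⟩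
  have hmlS : m l ∈ S := by
    refine ⟨e (pt l), ?_, hφe (pt l)⟩
    exact ⟨hord, le_rfl⟩
  have hSxy : ∀ z ∈ S, z ≠ x ∧ z ≠ y := by
    rintro z ⟨t, htJ, rfl⟩
    constructor <;> intro h
    · have h1 : e.symm t = ⟨x, hxA⟩ := Subtype.ext h
      have h2 : t = av := by
        rw [hav, ← h1, Homeomorph.apply_symm_apply]
      have := (hreg (t : ℝ) htJ.1 htJ.2).1
      rw [h2] at this
      exact this rfl
    · have h1 : e.symm t = ⟨y, hyA⟩ := Subtype.ext h
      have h2 : t = bv := by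
        rw [hbv, ← h1, Homeomorph.apply_symm_apply]
      have := (hreg (t : ℝ) htJ.1 htJ.2).2
      rw [h2] at this
      exact this rfl
  -- the separation
  set U : Set X := ⋃ i' ∈ {i' : Fin G.n | R (idx k) i'}, Set.range (G.edge i') with hUdef
  set W : Set X := ⋃ i' ∈ {i' : Fin G.n | ¬ R (idx k) i'}, Set.range (G.edge i') with hWdef
  have hclr : ∀ i' : Fin G.n, IsClosed (Set.range (G.edge i')) := by
    intro i'
    exact (isCompact_range (G.emb i').continuous).isClosed
  have hUcl : IsClosed U := Set.Finite.isClosed_biUnion (Set.toFinite _) fun i' _ => hclr i'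
  have hWcl : IsClosed W := Set.Finite.isClosed_biUnion (Set.toFinite _) fun i' _ => hclr i'
  have hcover : S ⊆ U ∪ W := by
    intro z _
    obtain ⟨i', hi'⟩ := hcov z
    by_cases h : R (idx k) i'
    · exact Or.inl (Set.mem_biUnion h hi')
    · exact Or.inr (Set.mem_biUnion h hi')
  have hSU : (S ∩ U).Nonempty :=
    ⟨m k, hmkS, Set.mem_biUnion (Relation.ReflTransGen.refl) ⟨half, rfl⟩⟩
  have hSW : (S ∩ W).Nonempty :=
    ⟨m l, hmlS, Set.mem_biUnion (hpair k l hkl) ⟨half, rfl⟩⟩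
  obtain ⟨z, hzS, hzU, hzW⟩ :=
    isPreconnected_closed_iff.mp hSconn U W hUcl hWcl hcover hSU hSW
  obtain ⟨i', hi'R, hzi⟩ := Set.mem_iUnion₂.mp hzU
  obtain ⟨j', hj'R, hzj⟩ := Set.mem_iUnion₂.mp hzW
  have hij : i' ≠ j' := fun h => hj'R (h ▸ hi'R)
  obtain ⟨h1, h2⟩ := G.meet i' j' hij z ⟨hzi, hzj⟩
  have hzB : ¬ B z := by
    obtain ⟨hz1, hz2⟩ := hSxy z hzS
    intro hc
    rcases hc with h | h
    · exact hz1 h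
    · exact hz2 h
  have hAdj : SevenACaux.Adj e0 e1 B i' j' := by
    have pick : ∀ (i0' : Fin G.n), z = G.edge i0' i0 ∨ z = G.edge i0' i1 →
        ∃ b : Bool, SevenACaux.vtx e0 e1 (i0', b) = z := by
      intro i0' hcase
      rcases hcase with h | h
      · exact ⟨false, h.symm⟩
      · exact ⟨true, h.symm⟩
    obtain ⟨bi, hbi⟩ := pick i' h1
    obtain ⟨bj, hbj⟩ := pick j' h2
    exact ⟨bi, bj, by rw [hbi]; exact hzB, by rw [hbi, hbj]⟩
  exact hj'R (hi'R.tail hAdj)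
end

section
/- Suppose R is the long ray with its order topology and τ is a compact Hausdorff topology on the underlying set of R that is coarser than or equal to the order topology on every closed bounded subinterval (i.e., the identity from R with the order topology to (R, τ) is a continuous bijection). Then there exists a point x in R such that every τ-open set containing x contains a tail (t, ∞) for some t in R. -/
open Set Topology

/-- The first uncountable ordinal `ω₁`, as the type of ordinals below `(ℵ₁).ord`. -/
def Omega1 : Type 1 := {o : Ordinal // o < (Cardinal.aleph 1).ord}

noncomputable instance : LinearOrder Omega1 := by unfold Omega1; infer_instance

/-- The long ray: the lexicographic product `ω₁ ×ₗ [0,1)` with the order topology. -/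
def LongRay : Type 1 := Lex (Omega1 × (Set.Ico (0:ℝ) 1))

noncomputable instance : LinearOrder LongRay := by
  unfold LongRay; exact Prod.Lex.instLinearOrder _ _

noncomputable instance longRayTop : TopologicalSpace LongRay := Preorder.topology LongRay

instance : OrderTopology LongRay := ⟨rfl⟩

open Filter

namespace LRAux

lemma lt_iff' (p q : Omega1 × (Set.Ico (0:ℝ) 1)) :
    @LT.lt LongRay _ (toLex p) (toLex q) ↔ p.1 < q.1 ∨ p.1 = q.1 ∧ p.2 < q.2 :=
  Prod.Lex.lt_iff (x := toLex p) (y := toLex q)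

lemma le_iff' (p q : Omega1 × (Set.Ico (0:ℝ) 1)) :
    @LE.le LongRay _ (toLex p) (toLex q) ↔ p.1 < q.1 ∨ p.1 = q.1 ∧ p.2 ≤ q.2 :=
  Prod.Lex.le_iff (x := toLex p) (y := toLex q)

lemma omega1_isLimit : Order.IsSuccLimit ((Cardinal.aleph 1).ord) :=
  Cardinal.isSuccLimit_ord (Cardinal.aleph0_le_aleph 1)

def succ1 (a : Omega1) : Omega1 := ⟨a.val + 1, by
  rw [Ordinal.add_one_eq_succ]
  exact omega1_isLimit.succ_lt a.2⟩

lemma lt_succ1 (a : Omega1) : a < succ1 a := by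
  show a.val < a.val + 1
  rw [Ordinal.add_one_eq_succ]; exact Order.lt_succ _

def pt0 : Set.Ico (0:ℝ) 1 := ⟨0, by norm_num⟩

lemma pt0_le (r : Set.Ico (0:ℝ) 1) : pt0 ≤ r := r.2.1

instance : Nonempty LongRay := ⟨toLex (⟨0, omega1_isLimit.pos⟩, pt0)⟩

instance : NoMaxOrder LongRay := by
  constructor
  intro p
  induction p using Lex.rec with
  | _ p =>
    refine ⟨toLex (succ1 p.1, pt0), ?_⟩
    exact (lt_iff' p _).mpr (Or.inl (lt_succ1 p.1))

lemma exists_isLUB (f : ℕ → LongRay) (hf : StrictMono f) :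
    ∃ z : LongRay, IsLUB (Set.range f) z := by
  set F : ℕ → Omega1 × Set.Ico (0:ℝ) 1 := fun n => ofLex (f n) with hF
  have hfn : ∀ n, f n = toLex (F n) := fun _ => rfl
  set g : ℕ → Ordinal := fun n => (F n).1.val with hg
  have hgmono : Monotone g := by
    intro m n hmn
    have h := (le_iff' (F m) (F n)).mp (hf.monotone hmn)
    rcases h with h | h
    · exact le_of_lt h
    · exact le_of_eq (congrArg Subtype.val h.1)
  by_cases hconst : ∃ N, ∀ n, g n ≤ g N
  · obtain ⟨N, hN⟩ := hconst
    set α : Omega1 := (F N).1 with hα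
    have hfirst : ∀ k, (F (N + k)).1 = α := by
      intro k
      exact Subtype.ext (le_antisymm (hN _) (hgmono (Nat.le_add_right _ _)))
    set r : ℕ → ℝ := fun k => ((F (N + k)).2 : ℝ) with hr
    have hbdd : BddAbove (Set.range r) :=
      ⟨1, by rintro x ⟨k, rfl⟩; exact le_of_lt (F (N + k)).2.2.2⟩
    set s : ℝ := ⨆ k, r k with hs
    have hrs : ∀ k, r k ≤ s := fun k => le_ciSup hbdd k
    have hfirstle : ∀ b ∈ upperBounds (Set.range f), α ≤ (ofLex b).1 := by
      intro b hb
      have h := (le_iff' (F N) (ofLex b)).mp (hb ⟨N, rfl⟩)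
      rcases h with h | h
      · exact le_of_lt h
      · exact le_of_eq h.1
    have hsec : ∀ (q : Omega1 × Set.Ico (0:ℝ) 1), q.1 = α →
        (toLex q : LongRay) ∈ upperBounds (Set.range f) → ∀ k, r k ≤ (q.2 : ℝ) := by
      intro q hq hub k
      have h := (le_iff' (F (N + k)) q).mp (hub ⟨N + k, rfl⟩)
      rcases h with h | h
      · rw [hfirst k, hq] at h; exact absurd h (lt_irrefl α)
      · exact h.2
    have hubk : ∀ (q : Set.Ico (0:ℝ) 1), (∀ k, r k ≤ (q : ℝ)) →
        (toLex (α, q) : LongRay) ∈ upperBounds (Set.range f) := by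
      rintro q hq x ⟨n, rfl⟩
      have h1 : f n ≤ f (N + n) := hf.monotone (Nat.le_add_left _ _)
      refine le_trans h1 ?_
      rw [hfn (N + n)]
      refine (le_iff' (F (N + n)) (α, q)).mpr (Or.inr ⟨hfirst n, ?_⟩)
      exact hq n
    by_cases hs1 : s < 1
    · refine ⟨toLex (α, ⟨s, le_trans (F (N + 0)).2.2.1 (hrs 0), hs1⟩), ?_⟩
      constructor
      · exact hubk _ hrs
      · intro b hb
        rcases (hfirstle b hb).lt_or_eq with h | h
        · exact (le_iff' _ (ofLex b)).mpr (Or.inl h)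
        · refine (le_iff' _ (ofLex b)).mpr (Or.inr ⟨h, ?_⟩)
          exact ciSup_le (hsec (ofLex b) h.symm hb)
    · refine ⟨toLex (succ1 α, pt0), ?_⟩
      constructor
      · rintro x ⟨n, rfl⟩
        have h1 : f n ≤ f (N + n) := hf.monotone (Nat.le_add_left _ _)
        refine le_trans h1 (le_of_lt ?_)
        rw [hfn (N + n)]
        exact (lt_iff' (F (N + n)) _).mpr (Or.inl (by rw [hfirst n]; exact lt_succ1 α))
      · intro b hb
        rcases (hfirstle b hb).lt_or_eq with h | h
        · have h2 : succ1 α ≤ (ofLex b).1 := by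
            show α.val + 1 ≤ (ofLex b).1.val
            rw [Ordinal.add_one_eq_succ]
            exact Order.succ_le_of_lt h
          rcases h2.lt_or_eq with h3 | h3
          · exact (le_iff' _ (ofLex b)).mpr (Or.inl h3)
          · exact (le_iff' _ (ofLex b)).mpr (Or.inr ⟨h3, pt0_le _⟩)
        · exfalso
          have h4 : s ≤ ((ofLex b).2 : ℝ) := ciSup_le (hsec (ofLex b) h.symm hb)
          exact hs1 (lt_of_le_of_lt h4 (ofLex b).2.2.2)
  · push_neg at hconst
    set β : Ordinal := ⨆ n, g n with hβdef
    have hβ : β < (Cardinal.aleph 1).ord := by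
      refine Ordinal.iSup_lt_ord ?_ fun n => (F n).1.2
      rw [Cardinal.isRegular_aleph_one.cof_eq, Cardinal.mk_nat]
      exact Cardinal.aleph0_lt_aleph_one
    have hglt : ∀ n, g n < β := fun n =>
      lt_of_lt_of_le (hconst n).choose_spec (Ordinal.le_iSup g _)
    refine ⟨toLex (⟨β, hβ⟩, pt0), ?_⟩
    constructor
    · rintro x ⟨n, rfl⟩
      rw [hfn n]
      exact le_of_lt ((lt_iff' (F n) _).mpr (Or.inl (hglt n)))
    · intro b hb
      have h : β ≤ (ofLex b).1.val := by
        refine Ordinal.iSup_le fun n => ?_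
        have h := (le_iff' (F n) (ofLex b)).mp (hb ⟨n, rfl⟩)
        rcases h with h | h
        · exact le_of_lt h
        · exact le_of_eq (congrArg Subtype.val h.1)
      rcases h.lt_or_eq with h3 | h3
      · exact (le_iff' _ (ofLex b)).mpr (Or.inl h3)
      · exact (le_iff' _ (ofLex b)).mpr (Or.inr ⟨Subtype.ext h3, pt0_le _⟩)


lemma exists_tendsto (f : ℕ → LongRay) (hf : StrictMono f) :
    ∃ z : LongRay, Tendsto f atTop (nhds z) := by
  obtain ⟨z, hz⟩ := exists_isLUB f hf
  refine ⟨z, tendsto_order.2 ⟨?_, ?_⟩⟩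
  · intro a ha
    have h2 : ∃ n, ¬ f n ≤ a := by
      by_contra h
      push_neg at h
      exact absurd (hz.2 (by rintro x ⟨n, rfl⟩; exact h n)) (not_le_of_gt ha)
    obtain ⟨n, hn⟩ := h2
    exact eventually_atTop.2 ⟨n, fun m hm => lt_of_lt_of_le (lt_of_not_ge hn) (hf.monotone hm)⟩
  · intro b hb
    exact Eventually.of_forall fun n => lt_of_le_of_lt (hz.1 ⟨n, rfl⟩) hb

lemma key {X : Type*} [LinearOrder X] [TopologicalSpace X] [CompactSpace X] [T2Space X]
    [Nonempty X] [NoMaxOrder X]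
    (hconv : ∀ f : ℕ → X, StrictMono f → ∃ z : X, ∀ C : Set X, IsClosed C →
      (∃ᶠ n in atTop, f n ∈ C) → z ∈ C) :
    ∃ x : X, ∀ U : Set X, IsOpen U → x ∈ U → ∃ t : X, Set.Ioi t ⊆ U := by
  haveI : (atTop : Filter X).NeBot := atTop_neBot
  have huniq : ∀ x y : X, ClusterPt x atTop → ClusterPt y atTop → x = y := by
    intro x y hx hy
    by_contra hxy
    obtain ⟨U, V, hU, hV, hxU, hyV, hUV⟩ := t2_separation hxy
    obtain ⟨C, hCnh, hCcl, hCU⟩ := exists_mem_nhds_isClosed_subset (hU.mem_nhds hxU)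
    obtain ⟨D, hDnh, hDcl, hDV⟩ := exists_mem_nhds_isClosed_subset (hV.mem_nhds hyV)
    have hC : ∀ t : X, ∃ s, t < s ∧ s ∈ C := by
      intro t
      obtain ⟨s, hs1, hs2⟩ := clusterPt_iff_nonempty.mp hx hCnh (Ioi_mem_atTop t)
      exact ⟨s, hs2, hs1⟩
    have hD : ∀ t : X, ∃ s, t < s ∧ s ∈ D := by
      intro t
      obtain ⟨s, hs1, hs2⟩ := clusterPt_iff_nonempty.mp hy hDnh (Ioi_mem_atTop t)
      exact ⟨s, hs2, hs1⟩
    choose sC hsC1 hsC2 using hC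
    choose sD hsD1 hsD2 using hD
    obtain ⟨t0⟩ := ‹Nonempty X›
    set w : ℕ → X := fun n =>
      Nat.rec (sC t0) (fun n p => if n % 2 = 0 then sD p else sC p) n with hw
    have hwsucc : ∀ n, w (n + 1) = if n % 2 = 0 then sD (w n) else sC (w n) := fun n => rfl
    have hwmono : StrictMono w := by
      refine strictMono_nat_of_lt_succ fun n => ?_
      rw [hwsucc]
      split
      · exact hsD1 _
      · exact hsC1 _
    have hwC : ∀ n, n % 2 = 0 → w n ∈ C := by
      intro n hn
      cases n with
      | zero => exact hsC2 t0
      | succ m =>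
        rw [hwsucc, if_neg (by omega)]
        exact hsC2 _
    have hwD : ∀ n, n % 2 = 1 → w n ∈ D := by
      intro n hn
      cases n with
      | zero => exact absurd hn (by omega)
      | succ m =>
        rw [hwsucc, if_pos (by omega)]
        exact hsD2 _
    obtain ⟨z, hz⟩ := hconv w hwmono
    have hzC : z ∈ C :=
      hz C hCcl (frequently_atTop.2 fun a => ⟨2 * a, by omega, hwC (2 * a) (by omega)⟩)
    have hzD : z ∈ D :=
      hz D hDcl (frequently_atTop.2 fun a => ⟨2 * a + 1, by omega, hwD (2 * a + 1) (by omega)⟩)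
    exact Set.disjoint_left.mp (hUV.mono hCU hDV) hzC hzD
  obtain ⟨x, hx⟩ := exists_clusterPt_of_compactSpace (atTop : Filter X)
  refine ⟨x, fun U hUo hxU => ?_⟩
  by_contra h
  push_neg at h
  have hne : (atTop ⊓ 𝓟 Uᶜ).NeBot := by
    rw [inf_principal_neBot_iff]
    intro S hS
    obtain ⟨a, ha⟩ := mem_atTop_sets.mp hS
    obtain ⟨s, hs1, hs2⟩ := Set.not_subset.mp (h a)
    exact ⟨s, ha s (le_of_lt hs1), hs2⟩
  obtain ⟨y, hy⟩ := exists_clusterPt_of_compactSpace (atTop ⊓ 𝓟 Uᶜ)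
  have hyx : y = x := huniq y x (hy.mono inf_le_left) hx
  have hycl : y ∈ closure Uᶜ := mem_closure_iff_clusterPt.mpr (hy.mono inf_le_right)
  rw [hUo.isClosed_compl.closure_eq, hyx] at hycl
  exact hycl hxU

end LRAux

/-- If `τ` is a compact Hausdorff topology on the long ray that is coarser than or
equal to its order topology (the identity map is a continuous bijection), then some
point `x` has the property that every `τ`-open set containing `x` contains a tail
`(t, ∞)`. -/
theorem compactification_point_at_infinity (τ : TopologicalSpace LongRay)
    (hcomp : @CompactSpace LongRay τ) (hT2 : @T2Space LongRay τ)
    (hle : Continuous[longRayTop, τ] (id : LongRay → LongRay)) :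
    ∃ x : LongRay, ∀ U : Set LongRay, τ.IsOpen U → x ∈ U →
      ∃ t : LongRay, Set.Ioi t ⊆ U := by
  have hconv : ∀ f : ℕ → LongRay, StrictMono f → ∃ z : LongRay, ∀ C : Set LongRay,
      @IsClosed _ τ C → (∃ᶠ n in Filter.atTop, f n ∈ C) → z ∈ C := by
    intro f hf
    obtain ⟨z, hz⟩ := LRAux.exists_tendsto f hf
    refine ⟨z, fun C hC hfreq => ?_⟩
    have hzt : Filter.Tendsto f Filter.atTop (@nhds _ τ z) :=
      (@Continuous.tendsto _ _ longRayTop τ _ hle z).comp hz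
    have hne0 : (Filter.atTop ⊓ 𝓟 {n | f n ∈ C}).NeBot :=
      Filter.frequently_iff_neBot.mp hfreq
    have hne : (Filter.map f Filter.atTop ⊓ 𝓟 C).NeBot := by
      refine (hne0.map f).mono (le_trans Filter.map_inf_le (inf_le_inf le_rfl ?_))
      rw [Filter.map_principal]
      exact Filter.principal_mono.mpr (by rintro y ⟨n, hn, rfl⟩; exact hn)
    have hcl : @ClusterPt _ τ z (𝓟 C) :=
      hne.mono (inf_le_inf_right _ hzt)
    have hmem := (@mem_closure_iff_clusterPt LongRay τ z C).mpr hcl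
    rwa [(@IsClosed.closure_eq _ τ _ hC : _)] at hmem
  exact @LRAux.key LongRay _ τ hcomp hT2 _ _ hconv
end
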